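/- arXiv:1802.01550 — 2 statements merged into one kernel-verified Lean document; each statement's English description precedes it below -/
import Mathlib

section
/- Let G be an ample groupoid and R a commutative ring with unit. If the set Z of points x in the unit space for which the isotropy group algebra RG_x is semiprime is R-dense, then the convolution algebra RG is a semiprime ring. -/
universe u

/-- An étale topological groupoid: arrows form a topological space, units are
identified with idempotent arrows via the domain map `d` and range map `r`;
the domain map is a local homeomorphism. -/
structure EtaleGroupoid : Type (u + 1) where
  Arr : Type u
  top : TopologicalSpace Arr
  d : Arr → Arr
  r : Arr → Arr
  comp : Arr → Arr → Arr
  inv : Arr → Arr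
  d_d : ∀ g, d (d g) = d g
  r_d : ∀ g, r (d g) = d g
  d_r : ∀ g, d (r g) = r g
  r_r : ∀ g, r (r g) = r g
  d_comp : ∀ g h, d g = r h → d (comp g h) = d h
  r_comp : ∀ g h, d g = r h → r (comp g h) = r g
  comp_assoc : ∀ g h k, d g = r h → d h = r k → comp (comp g h) k = comp g (comp h k)
  comp_unit_right : ∀ g, comp g (d g) = g
  comp_unit_left : ∀ g, comp (r g) g = g
  d_inv : ∀ g, d (inv g) = r g
  r_inv : ∀ g, r (inv g) = d g
  inv_inv : ∀ g, inv (inv g) = g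
  inv_comp : ∀ g, comp (inv g) g = d g
  comp_inv : ∀ g, comp g (inv g) = r g
  continuous_d : @Continuous Arr Arr top top d
  continuous_r : @Continuous Arr Arr top top r
  continuous_inv : @Continuous Arr Arr top top inv
  continuous_comp : @Continuous {p : Arr × Arr // d p.1 = r p.2} Arr
    (@instTopologicalSpaceSubtype _ _ (@instTopologicalSpaceProd _ _ top top)) top
    (fun p => comp p.val.1 p.val.2)
  etale : ∀ g : Arr, ∃ U : Set Arr, @IsOpen Arr top U ∧ g ∈ U ∧ Set.InjOn d U ∧
    ∀ V, V ⊆ U → @IsOpen Arr top V → @IsOpen Arr top (d '' V)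

instance (G : EtaleGroupoid) : TopologicalSpace G.Arr := G.top

namespace EtaleGroupoid

variable (G : EtaleGroupoid)

/-- The unit space `G⁽⁰⁾`, identified with the set of unit arrows. -/
def units : Set G.Arr := Set.range G.d

/-- A subset of the unit space is invariant if it is a union of orbits. -/
def Invariant (X : Set G.Arr) : Prop := ∀ g : G.Arr, G.d g ∈ X → G.r g ∈ X

/-- The orbit of a unit `x`. -/
def orbit (x : G.Arr) : Set G.Arr := {y | ∃ g, G.d g = x ∧ G.r g = y}

/-- `U` is an open subset of the unit space (open in the subspace topology). -/
def UnitsOpen (U : Set G.Arr) : Prop :=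
  U ⊆ G.units ∧ IsOpen (Subtype.val ⁻¹' U : Set ↥G.units)

/-- `C` is a closed subset of the unit space (closed in the subspace topology). -/
def UnitsClosed (C : Set G.Arr) : Prop :=
  C ⊆ G.units ∧ IsClosed (Subtype.val ⁻¹' C : Set ↥G.units)

/-- `X` is dense in the unit space. -/
def UnitsDense (X : Set G.Arr) : Prop :=
  Dense (Subtype.val ⁻¹' X : Set ↥G.units)

/-- `X` is nowhere dense in the unit space. -/
def UnitsNowhereDense (X : Set G.Arr) : Prop :=
  interior (closure (Subtype.val ⁻¹' X : Set ↥G.units)) = ∅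

/-- Topological transitivity: every non-empty open invariant subset of the
unit space is dense. -/
def TopTransitive : Prop :=
  ∀ U : Set G.Arr, G.UnitsOpen U → G.Invariant U → U.Nonempty → G.UnitsDense U

end EtaleGroupoid

namespace EtaleGroupoid

variable (G : EtaleGroupoid)

/-- The underlying set of the groupoid convolution algebra `RG`: the `R`-span of
characteristic functions of compact open subsets of the arrow space. -/
def AlgebraSet (R : Type) [CommRing R] : Set (G.Arr → R) :=
  (Submodule.span R {f : G.Arr → R | ∃ U : Set G.Arr,
      IsCompact U ∧ IsOpen U ∧ f = Set.indicator U fun _ => (1 : R)} :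
    Submodule R (G.Arr → R))

/-- Convolution: `(f ⋆ g)(x) = ∑_{d h = d x} f (x h⁻¹) g (h)`. -/
noncomputable def conv {R : Type} [CommRing R] (f g : G.Arr → R) : G.Arr → R := fun x =>
  ∑ᶠ (h : G.Arr) (_ : G.d h = G.d x), f (G.comp x (G.inv h)) * g h

/-- The convolution algebra `RG` is a prime ring (elementwise formulation). -/
def AlgPrime (R : Type) [CommRing R] : Prop :=
  (∃ f ∈ G.AlgebraSet R, f ≠ 0) ∧
  ∀ f ∈ G.AlgebraSet R, ∀ g ∈ G.AlgebraSet R,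
    (∀ h ∈ G.AlgebraSet R, G.conv (G.conv f h) g = 0) → f = 0 ∨ g = 0

/-- The convolution algebra `RG` is a semiprime ring (elementwise formulation). -/
def AlgSemiprime (R : Type) [CommRing R] : Prop :=
  ∀ f ∈ G.AlgebraSet R, (∀ h ∈ G.AlgebraSet R, G.conv (G.conv f h) f = 0) → f = 0

/-- `X ⊆ G⁽⁰⁾` is `R`-dense: every non-zero element of `RG` is non-zero at some
arrow whose domain lies in `X`. -/
def RDense (R : Type) [CommRing R] (X : Set G.Arr) : Prop :=
  ∀ f ∈ G.AlgebraSet R, f ≠ (0 : G.Arr → R) → ∃ g : G.Arr, f g ≠ 0 ∧ G.d g ∈ X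

/-- An étale groupoid is ample if its unit space is (locally compact) Hausdorff
with a basis of compact open sets. -/
def Ample : Prop :=
  T2Space ↥G.units ∧
  ∀ x ∈ G.units, ∀ U : Set G.Arr, G.UnitsOpen U → x ∈ U →
    ∃ K : Set G.Arr, K ⊆ U ∧ x ∈ K ∧ IsCompact K ∧ G.UnitsOpen K

/-- A groupoid is effective if the interior of the isotropy bundle is the unit
space. -/
def Effective : Prop := interior {g : G.Arr | G.d g = G.r g} = G.units

end EtaleGroupoid

namespace EtaleGroupoid

variable (G : EtaleGroupoid)

/-- The isotropy group of `G` at a unit `x`. -/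
def IsoGrp (x : G.Arr) : Type _ := {g : G.Arr // G.d g = x ∧ G.r g = x}

/-- The group structure on the isotropy group at a unit `x`. -/
def isoGroup (x : G.Arr) (hx : G.d x = x) : Group (G.IsoGrp x) where
  mul a b := ⟨G.comp a.1 b.1, by
    have hc : G.d a.1 = G.r b.1 := by rw [a.2.1, b.2.2]
    exact ⟨by rw [G.d_comp _ _ hc, b.2.1], by rw [G.r_comp _ _ hc, a.2.2]⟩⟩
  one := ⟨x, hx, by rw [← hx]; exact G.r_d x⟩
  inv a := ⟨G.inv a.1, by rw [G.d_inv, a.2.2], by rw [G.r_inv, a.2.1]⟩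
  mul_assoc a b c := Subtype.ext (G.comp_assoc _ _ _
    (by rw [a.2.1, b.2.2]) (by rw [b.2.1, c.2.2]))
  one_mul a := Subtype.ext (by
    have h := G.comp_unit_left a.1
    rw [a.2.2] at h
    exact h)
  mul_one a := Subtype.ext (by
    have h := G.comp_unit_right a.1
    rw [a.2.1] at h
    exact h)
  inv_mul_cancel a := Subtype.ext (by
    show G.comp (G.inv a.1) a.1 = x
    rw [G.inv_comp, a.2.1])

end EtaleGroupoid

/- ### Auxiliary lemmas for the proof of Statement 11 -/

namespace EtaleGroupoid

variable (G : EtaleGroupoid)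

lemma comp_unit_right' {a u : G.Arr} (h : G.d a = u) : G.comp a u = a := by
  rw [← h]; exact G.comp_unit_right a

lemma comp_unit_left' {a u : G.Arr} (h : G.r a = u) : G.comp u a = a := by
  rw [← h]; exact G.comp_unit_left a

lemma inv_uniq {c g : G.Arr} (h1 : G.d c = G.r g) (h2 : G.comp c g = G.d g) :
    c = G.inv g := by
  have e1 : G.comp c (G.comp g (G.inv g)) = c := by
    rw [G.comp_inv, ← h1, G.comp_unit_right]
  have e2 : G.comp c (G.comp g (G.inv g)) = G.inv g := by
    rw [← G.comp_assoc c g (G.inv g) h1 (G.r_inv g).symm, h2]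
    exact G.comp_unit_left' (G.r_inv g)
  rw [← e1, e2]

lemma inv_comp_rev {a b : G.Arr} (h : G.d a = G.r b) :
    G.inv (G.comp a b) = G.comp (G.inv b) (G.inv a) := by
  symm
  apply G.inv_uniq
  · rw [G.d_comp _ _ (by rw [G.d_inv, G.r_inv, h]), G.d_inv, G.r_comp _ _ h]
  · rw [G.d_comp _ _ h]
    rw [G.comp_assoc (G.inv b) (G.inv a) (G.comp a b)
      (by rw [G.d_inv, G.r_inv, h]) (by rw [G.d_inv, G.r_comp _ _ h])]
    rw [← G.comp_assoc (G.inv a) a b (G.d_inv a) h, G.inv_comp, h, G.comp_unit_left,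
      G.inv_comp]

lemma cancel_left {u γ : G.Arr} (h : G.r γ = G.d u) :
    G.comp (G.inv u) (G.comp u γ) = γ := by
  rw [← G.comp_assoc (G.inv u) u γ (G.d_inv u) h.symm, G.inv_comp]
  exact G.comp_unit_left' h

lemma cancel_left' {u h : G.Arr} (hh : G.r h = G.r u) :
    G.comp u (G.comp (G.inv u) h) = h := by
  rw [← G.comp_assoc u (G.inv u) h (G.r_inv u).symm (by rw [G.d_inv, hh]), G.comp_inv]
  exact G.comp_unit_left' hh

/-- The key combinatorial identity relating groupoid convolution factorizations
to products in the isotropy group. -/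
lemma keyId {u δ γ2 γ0 : G.Arr}
    (hδd : G.d δ = G.d u) (hδr : G.r δ = G.d u)
    (hγ2d : G.d γ2 = G.d u) (hγ2r : G.r γ2 = G.d u)
    (hγ0d : G.d γ0 = G.d u) (hγ0r : G.r γ0 = G.d u) :
    G.comp (G.comp (G.comp u δ) (G.inv (G.comp u γ2))) (G.inv (G.comp γ0 (G.inv u)))
      = G.comp u (G.comp (G.comp δ (G.inv γ2)) (G.inv γ0)) := by
  have h1 : G.inv (G.comp u γ2) = G.comp (G.inv γ2) (G.inv u) :=
    G.inv_comp_rev hγ2r.symm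
  have h2 : G.inv (G.comp γ0 (G.inv u)) = G.comp u (G.inv γ0) := by
    rw [G.inv_comp_rev (by rw [G.r_inv, hγ0d]), G.inv_inv]
  rw [h1, h2]
  -- basic d/r computations
  have hdA : G.d (G.comp u δ) = G.d u := by rw [G.d_comp u δ hδr.symm, hδd]
  have hrB : G.r (G.comp (G.inv γ2) (G.inv u)) = G.d u := by
    rw [G.r_comp _ _ (by rw [G.d_inv, G.r_inv, hγ2r]), G.r_inv, hγ2d]
  have hdB : G.d (G.comp (G.inv γ2) (G.inv u)) = G.r u := by
    rw [G.d_comp _ _ (by rw [G.d_inv, G.r_inv, hγ2r]), G.d_inv]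
  have hrE : G.r (G.comp u (G.inv γ0)) = G.r u :=
    G.r_comp u (G.inv γ0) (by rw [G.r_inv, hγ0d])
  -- associate: ((u δ) B) E = (u δ) (B E)
  rw [G.comp_assoc (G.comp u δ) (G.comp (G.inv γ2) (G.inv u)) (G.comp u (G.inv γ0))
    (by rw [hdA, hrB]) (by rw [hdB, hrE])]
  -- B E = γ2⁻¹ (u⁻¹ (u γ0⁻¹))
  rw [G.comp_assoc (G.inv γ2) (G.inv u) (G.comp u (G.inv γ0))
    (by rw [G.d_inv, G.r_inv, hγ2r]) (by rw [G.d_inv, hrE])]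
  rw [G.cancel_left (by rw [G.r_inv]; exact hγ0d)]
  -- (u δ) (γ2⁻¹ γ0⁻¹) = u (δ (γ2⁻¹ γ0⁻¹))
  rw [G.comp_assoc u δ (G.comp (G.inv γ2) (G.inv γ0)) hδr.symm
    (by rw [G.r_comp _ _ (by rw [G.d_inv, G.r_inv, hγ2r, hγ0d]), G.r_inv, hγ2d, hδd])]
  -- δ (γ2⁻¹ γ0⁻¹) = (δ γ2⁻¹) γ0⁻¹
  rw [← G.comp_assoc δ (G.inv γ2) (G.inv γ0) (by rw [G.r_inv, hγ2d, hδd])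
    (by rw [G.d_inv, G.r_inv, hγ2r, hγ0d])]

lemma fiber_finite (K : Set G.Arr) (hK : IsCompact K) (x : G.Arr) :
    {h | h ∈ K ∧ G.d h = x}.Finite := by
  choose U hUopen hUmem hUinj _ using G.etale
  obtain ⟨t, ht⟩ := hK.elim_finite_subcover U hUopen
    (fun g hg => Set.mem_iUnion.2 ⟨g, hUmem g⟩)
  have hsub : {h | h ∈ K ∧ G.d h = x} ⊆ ⋃ g ∈ t, {h | h ∈ U g ∧ G.d h = x} := by
    rintro h ⟨hhK, hhd⟩
    obtain ⟨g, hgt, hgU⟩ := Set.mem_iUnion₂.1 (ht hhK)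
    exact Set.mem_iUnion₂.2 ⟨g, hgt, hgU, hhd⟩
  refine Set.Finite.subset (Set.Finite.biUnion t.finite_toSet fun g _ => ?_) hsub
  apply Set.Subsingleton.finite
  rintro a ⟨haU, had⟩ b ⟨hbU, hbd⟩
  exact hUinj g haU hbU (had.trans hbd.symm)

lemma support_compact {R : Type} [CommRing R] {f : G.Arr → R}
    (hf : f ∈ G.AlgebraSet R) :
    ∃ S : Set G.Arr, IsCompact S ∧ ∀ y, f y ≠ 0 → y ∈ S := by
  have hf' : f ∈ Submodule.span R {f : G.Arr → R | ∃ U : Set G.Arr,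
      IsCompact U ∧ IsOpen U ∧ f = Set.indicator U fun _ => (1 : R)} := hf
  clear hf
  induction hf' using Submodule.span_induction with
  | mem g hg =>
    obtain ⟨U, hUc, _, rfl⟩ := hg
    exact ⟨U, hUc, fun y hy => by
      by_contra hyU
      exact hy (Set.indicator_of_notMem hyU _)⟩
  | zero => exact ⟨∅, isCompact_empty, fun y hy => absurd rfl hy⟩
  | add g h _ _ ihg ihh =>
    obtain ⟨S1, hS1, hS1s⟩ := ihg
    obtain ⟨S2, hS2, hS2s⟩ := ihh
    refine ⟨S1 ∪ S2, hS1.union hS2, fun y hy => ?_⟩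
    by_cases h1 : g y = 0
    · have : h y ≠ 0 := fun h2 => hy (by simp [Pi.add_apply, h1, h2])
      exact Or.inr (hS2s y this)
    · exact Or.inl (hS1s y h1)
  | smul c g _ ihg =>
    obtain ⟨S, hS, hSs⟩ := ihg
    refine ⟨S, hS, fun y hy => hSs y fun h1 => hy ?_⟩
    simp [Pi.smul_apply, h1]

lemma units_open : IsOpen G.units := by
  choose U hUopen hUmem hUinj hUimg using G.etale
  have : G.units = ⋃ g, G.d '' U g := by
    apply Set.Subset.antisymm
    · rintro _ ⟨g, rfl⟩
      exact Set.mem_iUnion.2 ⟨g, ⟨g, hUmem g, rfl⟩⟩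
    · rintro _ h
      obtain ⟨g, w, _, rfl⟩ := Set.mem_iUnion.1 h
      exact ⟨w, rfl⟩
  rw [this]
  exact isOpen_iUnion fun g => hUimg g (U g) (subset_refl _) (hUopen g)

lemma unitsOpen_isOpen {K : Set G.Arr} (h : G.UnitsOpen K) : IsOpen K := by
  have him : Subtype.val '' (Subtype.val ⁻¹' K : Set ↥G.units) = K := by
    rw [Subtype.image_preimage_coe]
    exact Set.inter_eq_self_of_subset_right h.1
  rw [← him]
  exact (G.units_open.isOpenMap_subtype_val) _ h.2

lemma compact_chart {U K2 : Set G.Arr} (hU : IsOpen U) (hinj : Set.InjOn G.d U)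
    (himg : ∀ V ⊆ U, IsOpen V → IsOpen (G.d '' V)) (hK2c : IsCompact K2)
    (hK2o : IsOpen K2) (hK2s : K2 ⊆ G.d '' U) :
    IsCompact (U ∩ G.d ⁻¹' K2) := by
  set C := U ∩ G.d ⁻¹' K2 with hC
  apply isCompact_of_finite_subcover
  intro ι O hO hcov
  have hQopen : ∀ i, IsOpen (G.d '' (O i ∩ C)) := fun i =>
    himg _ (fun y hy => hy.2.1) ((hO i).inter (hU.inter (hK2o.preimage G.continuous_d)))
  have hKcov : K2 ⊆ ⋃ i, G.d '' (O i ∩ C) := by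
    intro y hy
    obtain ⟨w, hwU, hwd⟩ := hK2s hy
    have hwC : w ∈ C := ⟨hwU, by rw [Set.mem_preimage, hwd]; exact hy⟩
    obtain ⟨i, hi⟩ := Set.mem_iUnion.1 (hcov hwC)
    exact Set.mem_iUnion.2 ⟨i, w, ⟨hi, hwC⟩, hwd⟩
  obtain ⟨t, ht⟩ := hK2c.elim_finite_subcover _ hQopen hKcov
  refine ⟨t, fun c hc => ?_⟩
  obtain ⟨i, hit, w, ⟨hwO, hwC⟩, hwd⟩ := Set.mem_iUnion₂.1 (ht hc.2)
  have : w = c := hinj hwC.1 hc.1 hwd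
  exact Set.mem_iUnion₂.2 ⟨i, hit, this ▸ hwO⟩

lemma conv_eval {R : Type} [CommRing R] (f g : G.Arr → R) (y : G.Arr)
    (s : Finset G.Arr)
    (h1 : ∀ h, G.d h = G.d y → g h ≠ 0 → h ∈ s)
    (h2 : ∀ h ∈ s, G.d h = G.d y) :
    G.conv f g y = ∑ h ∈ s, f (G.comp y (G.inv h)) * g h := by
  classical
  show (∑ᶠ (h : G.Arr) (_ : G.d h = G.d y), f (G.comp y (G.inv h)) * g h) = _
  have e1 : ∀ h : G.Arr,
      (∑ᶠ _ : G.d h = G.d y, f (G.comp y (G.inv h)) * g h)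
        = if G.d h = G.d y then f (G.comp y (G.inv h)) * g h else 0 :=
    fun h => finsum_eq_if
  rw [finsum_congr e1]
  rw [finsum_eq_finset_sum_of_support_subset _ (s := s) ?_]
  · exact Finset.sum_congr rfl fun h hh => if_pos (h2 h hh)
  · intro h hh
    simp only [Function.mem_support] at hh
    by_cases hd : G.d h = G.d y
    · rw [if_pos hd] at hh
      exact h1 h hd (right_ne_zero_of_mul hh)
    · rw [if_neg hd] at hh
      exact absurd rfl hh

lemma indicator_mem {R : Type} [CommRing R] {C : Set G.Arr} (hc : IsCompact C)
    (ho : IsOpen C) : (Set.indicator C fun _ => (1 : R)) ∈ G.AlgebraSet R :=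
  Submodule.subset_span ⟨C, hc, ho, rfl⟩

end EtaleGroupoid

/-- If the set of units `x` whose isotropy group algebra `R G_x`
is semiprime is `R`-dense, then the convolution algebra `RG` is semiprime. -/
theorem stmt11 (R : Type) [CommRing R] (G : EtaleGroupoid) (hample : G.Ample)
    (hdense : G.RDense R {x : G.Arr | ∃ hx : G.d x = x,
      letI := G.isoGroup x hx
      ∀ a : MonoidAlgebra R (G.IsoGrp x),
        (∀ c : MonoidAlgebra R (G.IsoGrp x), a * c * a = 0) → a = 0}) :
    G.AlgSemiprime R := by
  classical
  intro f hf hsq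
  by_contra hf0
  obtain ⟨g0, hfg0, hg0Z⟩ := hdense f hf hf0
  obtain ⟨hx, hsp⟩ := hg0Z
  set x := G.d g0 with hxdef
  letI : Group (G.IsoGrp x) := G.isoGroup x hx
  -- finite fiber of the support of f over x
  obtain ⟨S, hScomp, hSsupp⟩ := G.support_compact hf
  have hFfin : {h : G.Arr | f h ≠ 0 ∧ G.d h = x}.Finite := by
    apply (G.fiber_finite S hScomp x).subset
    rintro h ⟨h1, h2⟩
    exact ⟨hSsupp h h1, h2⟩
  set F : Set G.Arr := {h : G.Arr | f h ≠ 0 ∧ G.d h = x} with hFdef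
  set FT : Finset G.Arr := hFfin.toFinset with hFTdef
  -- the element `a` of the isotropy group algebra at x
  have hinj : Function.Injective (fun γ : G.IsoGrp x => G.comp g0 γ.1) := by
    intro γ γ' hcomp
    apply Subtype.ext
    have h1 := congrArg (G.comp (G.inv g0)) hcomp
    simp only at h1
    rwa [G.cancel_left (γ.2.2.trans hxdef), G.cancel_left (γ'.2.2.trans hxdef)] at h1
  have hmemF : ∀ γ : G.IsoGrp x, f (G.comp g0 γ.1) ≠ 0 → G.comp g0 γ.1 ∈ F := by
    intro γ hne
    refine ⟨hne, ?_⟩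
    rw [G.d_comp g0 γ.1 (γ.2.2.trans hxdef).symm]
    exact γ.2.1
  have hαfin : (Function.support fun γ : G.IsoGrp x => f (G.comp g0 γ.1)).Finite := by
    have himage : (fun γ : G.IsoGrp x => G.comp g0 γ.1) ''
        (Function.support fun γ : G.IsoGrp x => f (G.comp g0 γ.1)) ⊆ F := by
      rintro _ ⟨γ, hγ, rfl⟩
      exact hmemF γ hγ
    exact Set.Finite.of_finite_image (hFfin.subset himage) hinj.injOn
  set a : MonoidAlgebra R (G.IsoGrp x) :=
    MonoidAlgebra.ofCoeff (Finsupp.ofSupportFinite (fun γ : G.IsoGrp x => f (G.comp g0 γ.1)) hαfin) with hadef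
  have ha : ∀ γ : G.IsoGrp x, a.coeff γ = f (G.comp g0 γ.1) := by
    intro γ
    rw [hadef]
    exact congrFun Finsupp.ofSupportFinite_coe γ
  have ha1 : a.coeff 1 = f g0 := by
    rw [ha 1]
    congr 1
    show G.comp g0 x = g0
    rw [hxdef]
    exact G.comp_unit_right g0
  -- Hausdorffness of the unit space: a compact open unit neighbourhood K of r g0
  -- avoiding the other range points of the fiber F
  obtain ⟨hT2, hbasis⟩ := hample
  haveI := hT2
  have hy0u : G.r g0 ∈ G.units := ⟨G.inv g0, G.d_inv g0⟩
  have hBadfin : ((G.r '' F) \ {G.r g0}).Finite :=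
    (hFfin.image G.r).subset Set.diff_subset
  have hBad'fin : (Subtype.val ⁻¹' ((G.r '' F) \ {G.r g0}) : Set ↥G.units).Finite :=
    hBadfin.preimage Subtype.val_injective.injOn
  have hVopen : IsOpen ((Subtype.val ⁻¹' ((G.r '' F) \ {G.r g0}) : Set ↥G.units)ᶜ) :=
    hBad'fin.isClosed.isOpen_compl
  have hU0 : G.UnitsOpen (Subtype.val ''
      ((Subtype.val ⁻¹' ((G.r '' F) \ {G.r g0}) : Set ↥G.units)ᶜ)) := by
    constructor
    · rintro _ ⟨w, _, rfl⟩
      exact w.2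
    · rw [Set.preimage_image_eq _ Subtype.val_injective]
      exact hVopen
  have hy0U0 : G.r g0 ∈ Subtype.val ''
      ((Subtype.val ⁻¹' ((G.r '' F) \ {G.r g0}) : Set ↥G.units)ᶜ) := by
    refine ⟨⟨G.r g0, hy0u⟩, ?_, rfl⟩
    intro hmem
    exact hmem.2 rfl
  obtain ⟨K, hKU0, hy0K, hKcomp, hKuo⟩ := hbasis (G.r g0) hy0u _ hU0 hy0U0
  have hKopen : IsOpen K := G.unitsOpen_isOpen hKuo
  have hKbad : ∀ h2 ∈ F, G.r h2 ∈ K → G.r h2 = G.r g0 := by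
    intro h2 hh2F hh2K
    by_contra hne
    obtain ⟨w, hwV, hwval⟩ := hKU0 hh2K
    apply hwV
    show w ∈ Subtype.val ⁻¹' _
    rw [Set.mem_preimage, hwval]
    exact ⟨⟨h2, hh2F, rfl⟩, by simpa using hne⟩
  -- the central claim: a • c • a = 0 for all c in the isotropy group algebra
  have hmain : ∀ c : MonoidAlgebra R (G.IsoGrp x), a * c * a = 0 := by
    intro c
    induction c using MonoidAlgebra.induction_on with
    | add p q hp hq => rw [mul_add, add_mul, hp, hq, add_zero]
    | smul r0 p hp => rw [mul_smul_comm, smul_mul_assoc, hp, smul_zero]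
    | of γ0 =>
      rw [MonoidAlgebra.of_apply]
      -- construct a compact open d-bisection C around hst := γ0 g0⁻¹
      have hdg0 : G.d γ0.1 = G.r (G.inv g0) := by
        rw [G.r_inv]
        exact γ0.2.1.trans hxdef
      set hst : G.Arr := G.comp γ0.1 (G.inv g0) with hstdef
      have hdstar : G.d hst = G.r g0 := by
        rw [hstdef, G.d_comp _ _ hdg0, G.d_inv]
      obtain ⟨Us, hUsopen, hstUs, hUsinj, hUsimg⟩ := G.etale hst
      set W : Set G.Arr := Us ∩ G.d ⁻¹' K with hWdef
      have hWopen : IsOpen W := hUsopen.inter (hKopen.preimage G.continuous_d)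
      have hstW : hst ∈ W := ⟨hstUs, by rw [Set.mem_preimage, hdstar]; exact hy0K⟩
      have hdWopen : IsOpen (G.d '' W) := hUsimg W Set.inter_subset_left hWopen
      have hdWuo : G.UnitsOpen (G.d '' W) := by
        constructor
        · rintro _ ⟨w, _, rfl⟩
          exact ⟨w, rfl⟩
        · exact hdWopen.preimage continuous_subtype_val
      have hy0dW : G.r g0 ∈ G.d '' W := ⟨hst, hstW, hdstar⟩
      obtain ⟨K2, hK2sub, hy0K2, hK2comp, hK2uo⟩ := hbasis (G.r g0) hy0u _ hdWuo hy0dW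
      have hK2open : IsOpen K2 := G.unitsOpen_isOpen hK2uo
      set C : Set G.Arr := W ∩ G.d ⁻¹' K2 with hCdef
      have hCopen : IsOpen C := hWopen.inter (hK2open.preimage G.continuous_d)
      have hstC : hst ∈ C := ⟨hstW, by rw [Set.mem_preimage, hdstar]; exact hy0K2⟩
      have hCcomp : IsCompact C := G.compact_chart hWopen
        (hUsinj.mono Set.inter_subset_left)
        (fun V hV hVo => hUsimg V (hV.trans Set.inter_subset_left) hVo)
        hK2comp hK2open hK2sub
      have hCK : ∀ h1 ∈ C, G.d h1 ∈ K := fun h1 hh1 => hh1.1.2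
      have hCinj : ∀ h1 ∈ C, G.d h1 = G.r g0 → h1 = hst := fun h1 hh1 hd =>
        hUsinj hh1.1.1 hstUs (by rw [hd, hdstar])
      set wC : G.Arr → R := Set.indicator C fun _ => (1 : R) with hwCdef
      have hwCmem : wC ∈ G.AlgebraSet R := G.indicator_mem hCcomp hCopen
      have hzero := hsq wC hwCmem
      -- coefficientwise vanishing
      refine MonoidAlgebra.coeff_injective (Finsupp.ext fun δ => ?_)
      simp only [MonoidAlgebra.coeff_zero, Finsupp.coe_zero, Pi.zero_apply]
      set ξ : G.Arr := G.comp g0 δ.1 with hξdef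
      have hdξ : G.d ξ = x := by
        rw [hξdef, G.d_comp _ _ (δ.2.2.trans hxdef).symm]
        exact δ.2.1
      have hconv0 : G.conv (G.conv f wC) f ξ = 0 := by rw [hzero]; rfl
      have houter : G.conv (G.conv f wC) f ξ
          = ∑ h2 ∈ FT, G.conv f wC (G.comp ξ (G.inv h2)) * f h2 := by
        apply G.conv_eval
        · intro h hd hfh
          rw [hdξ] at hd
          exact hFfin.mem_toFinset.2 ⟨hfh, hd⟩
        · intro h hh
          rw [hdξ]
          exact (hFfin.mem_toFinset.1 hh).2
      have hinner : ∀ h2 ∈ FT, G.conv f wC (G.comp ξ (G.inv h2))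
          = if G.r h2 = G.r g0
            then f (G.comp (G.comp ξ (G.inv h2)) (G.inv hst)) else 0 := by
        intro h2 hh2
        obtain ⟨hfh2, hdh2⟩ := hFfin.mem_toFinset.1 hh2
        have hdy : G.d (G.comp ξ (G.inv h2)) = G.r h2 := by
          rw [G.d_comp _ _ (by rw [G.r_inv, hdξ, hdh2]), G.d_inv]
        by_cases hr : G.r h2 = G.r g0
        · rw [if_pos hr]
          have c1 : ∀ h, G.d h = G.d (G.comp ξ (G.inv h2)) → wC h ≠ 0 →
              h ∈ ({hst} : Finset G.Arr) := by
            intro h1 hd hw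
            have hC : h1 ∈ C := by
              by_contra hc
              apply hw
              rw [hwCdef]
              exact Set.indicator_of_notMem hc _
            rw [Finset.mem_singleton]
            exact hCinj h1 hC (by rw [hd, hdy, hr])
          have c2 : ∀ h ∈ ({hst} : Finset G.Arr),
              G.d h = G.d (G.comp ξ (G.inv h2)) := by
            intro h1 hh1
            rw [Finset.mem_singleton] at hh1
            subst hh1
            rw [hdstar, hdy, hr]
          have hwst : wC hst = 1 := by
            rw [hwCdef]
            exact Set.indicator_of_mem hstC _
          rw [G.conv_eval f wC _ _ c1 c2, Finset.sum_singleton, hwst, mul_one]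
        · rw [if_neg hr]
          have c1 : ∀ h, G.d h = G.d (G.comp ξ (G.inv h2)) → wC h ≠ 0 →
              h ∈ (∅ : Finset G.Arr) := by
            intro h1 hd hw
            exfalso
            have hC : h1 ∈ C := by
              by_contra hc
              apply hw
              rw [hwCdef]
              exact Set.indicator_of_notMem hc _
            have hK' : G.r h2 ∈ K := by
              rw [← hdy, ← hd]
              exact hCK h1 hC
            exact hr (hKbad h2 ⟨hfh2, hdh2⟩ hK')
          have c2 : ∀ h ∈ (∅ : Finset G.Arr),
              G.d h = G.d (G.comp ξ (G.inv h2)) := by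
            intro h1 hh1
            exact absurd hh1 (Finset.notMem_empty h1)
          rw [G.conv_eval f wC _ _ c1 c2, Finset.sum_empty]
      have hcoef : (a * MonoidAlgebra.single γ0 (1 : R) * a).coeff δ
          = ∑ q ∈ a.coeff.support, a.coeff (δ * q⁻¹ * γ0⁻¹) * a.coeff q := by
        rw [MonoidAlgebra.coeff_mul_apply_right]
        simp only [Finsupp.sum]
        exact Finset.sum_congr rfl fun q hq => by
          rw [MonoidAlgebra.coeff_mul_single_apply, mul_one]
      have hbij : ∑ q ∈ a.coeff.support, a.coeff (δ * q⁻¹ * γ0⁻¹) * a.coeff q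
          = ∑ h2 ∈ FT.filter fun h2 => G.r h2 = G.r g0,
              f (G.comp (G.comp ξ (G.inv h2)) (G.inv hst)) * f h2 := by
        apply Finset.sum_bij
          (fun (q : G.IsoGrp x) (_ : q ∈ a.coeff.support) => G.comp g0 q.1)
        · intro q hq
          rw [Finset.mem_filter]
          constructor
          · apply hFfin.mem_toFinset.2
            refine ⟨?_, ?_⟩
            · intro h0
              exact (Finsupp.mem_support_iff.1 hq) (by rw [ha q]; exact h0)
            · rw [G.d_comp _ _ (q.2.2.trans hxdef).symm]
              exact q.2.1
          · rw [G.r_comp _ _ (q.2.2.trans hxdef).symm]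
        · intro q1 h1 q2 h2 heq
          exact hinj heq
        · intro h2 hh2
          rw [Finset.mem_filter] at hh2
          obtain ⟨hh2FT, hh2r⟩ := hh2
          obtain ⟨hfh2, hdh2⟩ := hFfin.mem_toFinset.1 hh2FT
          have hcompable : G.d (G.inv g0) = G.r h2 := by rw [G.d_inv, hh2r]
          refine ⟨⟨G.comp (G.inv g0) h2, ?_, ?_⟩, ?_, ?_⟩
          · rw [G.d_comp _ _ hcompable]
            exact hdh2
          · rw [G.r_comp _ _ hcompable, G.r_inv]
          · apply Finsupp.mem_support_iff.2
            refine ne_of_eq_of_ne (ha _) ?_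
            show f (G.comp g0 (G.comp (G.inv g0) h2)) ≠ 0
            rw [G.cancel_left' hh2r]
            exact hfh2
          · exact G.cancel_left' hh2r
        · intro q hq
          rw [ha, ha]
          congr 1
          show f (G.comp g0 (G.comp (G.comp δ.1 (G.inv q.1)) (G.inv γ0.1))) = _
          rw [hξdef, hstdef]
          exact congrArg f (G.keyId (δ.2.1.trans hxdef) (δ.2.2.trans hxdef)
            (q.2.1.trans hxdef) (q.2.2.trans hxdef)
            (γ0.2.1.trans hxdef) (γ0.2.2.trans hxdef)).symm
      have hfilter : ∑ h2 ∈ FT.filter fun h2 => G.r h2 = G.r g0,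
            f (G.comp (G.comp ξ (G.inv h2)) (G.inv hst)) * f h2
          = ∑ h2 ∈ FT, G.conv f wC (G.comp ξ (G.inv h2)) * f h2 := by
        rw [Finset.sum_filter]
        apply Finset.sum_congr rfl
        intro h2 hh2
        rw [hinner h2 hh2, ite_mul, zero_mul]
      calc (a * MonoidAlgebra.single γ0 (1 : R) * a).coeff δ
          = ∑ q ∈ a.coeff.support, a.coeff (δ * q⁻¹ * γ0⁻¹) * a.coeff q := hcoef
        _ = ∑ h2 ∈ FT.filter fun h2 => G.r h2 = G.r g0,
              f (G.comp (G.comp ξ (G.inv h2)) (G.inv hst)) * f h2 := hbij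
        _ = ∑ h2 ∈ FT, G.conv f wC (G.comp ξ (G.inv h2)) * f h2 := hfilter
        _ = G.conv (G.conv f wC) f ξ := houter.symm
        _ = 0 := hconv0
  have hane : a = 0 := hsp a hmain
  apply hfg0
  rw [← ha1, hane]
  rfl
end

section
/- Let G be an effective Hausdorff ample groupoid with second countable unit space and let k be a field. Then the convolution algebra kG is prime if and only if it is primitive. -/
universe u

/-- A (possibly non-unital) ring is (left) primitive: it admits a faithful
irreducible representation. -/
def IsPrimitiveRingE (A : Type u) [Add A] [Mul A] [Zero A] : Prop :=
  ∃ (M : Type u) (_ : AddCommGroup M) (ρ : A → M → M),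
    (∀ a b m, ρ (a + b) m = ρ a m + ρ b m) ∧
    (∀ a m m', ρ a (m + m') = ρ a m + ρ a m') ∧
    (∀ a b m, ρ (a * b) m = ρ a (ρ b m)) ∧
    (∃ a m, ρ a m ≠ 0) ∧
    (∀ N : AddSubgroup M, (∀ a : A, ∀ m ∈ N, ρ a m ∈ N) → N = ⊥ ∨ N = ⊤) ∧
    (∀ a : A, (∀ m : M, ρ a m = 0) → a = 0)

/-- A (possibly non-unital) ring is prime. -/
def IsPrimeRingE (A : Type u) [Mul A] [Zero A] : Prop :=
  (∃ a : A, a ≠ 0) ∧ ∀ a b : A, (∀ x : A, a * x * b = 0) → a = 0 ∨ b = 0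

/-! ### Auxiliary development -/

open Function Set

section FinsumHelpers

open Classical in
theorem finsum_cond_eq_sum {α : Type} {k : Type} [AddCommMonoid k] (P : α → Prop) (F : α → k)
    (s : Finset α) (h : ∀ g, P g → F g ≠ 0 → g ∈ s) :
    (∑ᶠ (g) (_ : P g), F g) = ∑ g ∈ s, if P g then F g else 0 := by
  have h1 : ∀ g : α, (∑ᶠ (_ : P g), F g) = if P g then F g else 0 := fun g => finsum_eq_if
  calc (∑ᶠ (g) (_ : P g), F g) = ∑ᶠ (g), if P g then F g else 0 := finsum_congr h1
    _ = ∑ g ∈ s, if P g then F g else 0 := by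
        apply finsum_eq_sum_of_support_subset
        intro g hg
        simp only [Function.mem_support] at hg
        by_cases hp : P g
        · simp only [if_pos hp] at hg
          exact Finset.mem_coe.2 (h g hp hg)
        · simp [if_neg hp] at hg

open Classical in
theorem finsum_cond_eq_single {α : Type} {k : Type} [AddCommMonoid k] (P : α → Prop) (F : α → k)
    (a : α) (hP : P a) (h : ∀ g, P g → F g ≠ 0 → g = a) :
    (∑ᶠ (g) (_ : P g), F g) = F a := by
  rw [finsum_cond_eq_sum P F {a} (fun g hg hF => Finset.mem_singleton.2 (h g hg hF))]
  simp [hP]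

open Classical in
theorem finsum_cond_eq_zero {α : Type} {k : Type} [AddCommMonoid k] (P : α → Prop) (F : α → k)
    (h : ∀ g, P g → F g = 0) : (∑ᶠ (g) (_ : P g), F g) = 0 := by
  have h1 : ∀ g : α, (∑ᶠ (_ : P g), F g) = if P g then F g else 0 := fun g => finsum_eq_if
  rw [finsum_congr h1]
  apply finsum_eq_zero_of_forall_eq_zero
  intro g
  by_cases hp : P g
  · simp [hp, h g hp]
  · simp [hp]

theorem exists_of_finsum_cond_ne_zero {α : Type} {k : Type} [AddCommMonoid k] {P : α → Prop}
    {F : α → k} (h : (∑ᶠ (g) (_ : P g), F g) ≠ 0) : ∃ g, P g ∧ F g ≠ 0 := by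
  by_contra hc
  push_neg at hc
  exact h (finsum_cond_eq_zero P F (fun g hg => by
    by_contra hF; exact hF (hc g hg)))

end FinsumHelpers

namespace EtaleGroupoid

variable (G : EtaleGroupoid.{0})

/-! #### Groupoid basics -/

theorem mem_units_iff {g : G.Arr} : g ∈ G.units ↔ G.d g = g := by
  constructor
  · rintro ⟨h, rfl⟩; exact G.d_d h
  · intro h; exact ⟨g, h⟩

theorem d_mem_units (g : G.Arr) : G.d g ∈ G.units := ⟨g, rfl⟩

theorem r_mem_units (g : G.Arr) : G.r g ∈ G.units := ⟨G.inv g, G.d_inv g⟩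

theorem d_unit {u : G.Arr} (hu : u ∈ G.units) : G.d u = u := (G.mem_units_iff).1 hu

theorem r_unit {u : G.Arr} (hu : u ∈ G.units) : G.r u = u := by
  obtain ⟨g, rfl⟩ := hu; exact G.r_d g

theorem inv_unit {u : G.Arr} (hu : u ∈ G.units) : G.inv u = u := by
  have h1 : G.inv u = G.comp (G.r (G.inv u)) (G.inv u) := (G.comp_unit_left _).symm
  rw [G.r_inv, G.d_unit hu] at h1
  rw [h1, G.comp_inv, G.r_unit hu]

theorem orbit_subset_units (x : G.Arr) : G.orbit x ⊆ G.units := by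
  rintro y ⟨g, _, rfl⟩; exact G.r_mem_units g

theorem mem_orbit_self {x : G.Arr} (hx : x ∈ G.units) : x ∈ G.orbit x :=
  ⟨x, G.d_unit hx, G.r_unit hx⟩

theorem orbit_inv {x y : G.Arr} (h : y ∈ G.orbit x) (hx : x ∈ G.units) : x ∈ G.orbit y := by
  obtain ⟨g, hd, hr⟩ := h
  exact ⟨G.inv g, by rw [G.d_inv, hr], by rw [G.r_inv, hd]⟩

/-- If the domain of `g` is in the orbit of `x`, so is the range. -/
theorem orbit_trans {x : G.Arr} {g : G.Arr} (h : G.d g ∈ G.orbit x) : G.r g ∈ G.orbit x := by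
  obtain ⟨h₁, hd₁, hr₁⟩ := h
  refine ⟨G.comp g h₁, ?_, ?_⟩
  · rw [G.d_comp g h₁ hr₁.symm, hd₁]
  · rw [G.r_comp g h₁ hr₁.symm]

/-- Arrow between two points of an orbit. -/
theorem exists_arrow_of_orbit {x y z : G.Arr} (hy : y ∈ G.orbit x) (hz : z ∈ G.orbit x) :
    ∃ g, G.d g = y ∧ G.r g = z := by
  obtain ⟨g₁, hd₁, hr₁⟩ := hy
  obtain ⟨g₂, hd₂, hr₂⟩ := hz
  have hc : G.d g₂ = G.r (G.inv g₁) := by rw [G.r_inv, hd₁, hd₂]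
  refine ⟨G.comp g₂ (G.inv g₁), ?_, ?_⟩
  · rw [G.d_comp _ _ hc, G.d_inv, hr₁]
  · rw [G.r_comp _ _ hc, hr₂]

theorem comp_inv_cancel' {g v : G.Arr} (h : G.d v = G.d g) :
    G.comp (G.comp g (G.inv v)) v = g := by
  have hc : G.d g = G.r (G.inv v) := by rw [G.r_inv, h]
  have hc2 : G.d (G.inv v) = G.r v := G.d_inv v
  rw [G.comp_assoc g (G.inv v) v hc hc2, G.inv_comp, h, G.comp_unit_right]

theorem comp_cancel_inv' {u v : G.Arr} (h : G.d u = G.r v) :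
    G.comp (G.comp u v) (G.inv v) = u := by
  rw [G.comp_assoc u v (G.inv v) h (by rw [G.r_inv]), G.comp_inv, ← h, G.comp_unit_right]

theorem r_comp_inv {g v : G.Arr} (h : G.d v = G.d g) :
    G.r (G.comp g (G.inv v)) = G.r g :=
  G.r_comp g (G.inv v) (by rw [G.r_inv, h])

theorem d_comp_inv {g v : G.Arr} (h : G.d v = G.d g) :
    G.d (G.comp g (G.inv v)) = G.r v := by
  rw [G.d_comp g (G.inv v) (by rw [G.r_inv, h]), G.d_inv]

end EtaleGroupoid

namespace EtaleGroupoid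

variable (G : EtaleGroupoid.{0})

/-! #### Topological basics -/

theorem isOpenMap_d : IsOpenMap G.d := by
  intro O hO
  rw [isOpen_iff_forall_mem_open]
  rintro x ⟨g, hg, rfl⟩
  obtain ⟨U, hUo, hgU, hinj, himg⟩ := G.etale g
  exact ⟨G.d '' (U ∩ O), image_mono inter_subset_right,
    himg _ inter_subset_left (hUo.inter hO), ⟨g, ⟨hgU, hg⟩, rfl⟩⟩

theorem isOpenMap_inv : IsOpenMap G.inv := by
  intro O hO
  have : G.inv '' O = G.inv ⁻¹' O := by
    ext x
    constructor
    · rintro ⟨y, hy, rfl⟩; simpa [G.inv_inv] using hy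
    · intro hx; exact ⟨G.inv x, hx, G.inv_inv x⟩
  rw [this]
  exact hO.preimage G.continuous_inv

theorem isOpenMap_r : IsOpenMap G.r := by
  have : G.r = G.d ∘ G.inv := by funext g; simp [Function.comp, G.d_inv]
  rw [this]
  exact (G.isOpenMap_d).comp (G.isOpenMap_inv)

theorem isOpen_units (heff : G.Effective) : IsOpen G.units := by
  rw [← heff]; exact isOpen_interior

theorem unitsOpen_isOpen_s12 (hop : IsOpen G.units) {U : Set G.Arr} (hU : G.UnitsOpen U) :
    IsOpen U := by
  obtain ⟨hsub, hopen⟩ := hU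
  obtain ⟨V, hV, hVeq⟩ := isOpen_induced_iff.1 hopen
  have : U = V ∩ G.units := by
    ext x
    constructor
    · intro hx
      have hxu : x ∈ G.units := hsub hx
      have : (⟨x, hxu⟩ : ↥G.units) ∈ (Subtype.val ⁻¹' U : Set ↥G.units) := hx
      rw [← hVeq] at this
      exact ⟨this, hxu⟩
    · rintro ⟨hxV, hxu⟩
      have : (⟨x, hxu⟩ : ↥G.units) ∈ (V.preimage Subtype.val) := hxV
      rw [hVeq] at this
      exact this
  rw [this]
  exact hV.inter hop

theorem unitsOpen_of_isOpen {U : Set G.Arr} (hsub : U ⊆ G.units) (hU : IsOpen U) :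
    G.UnitsOpen U := ⟨hsub, hU.preimage continuous_subtype_val⟩

variable [T2Space G.Arr]

/-- compact sets meet `d`-fibers in finite sets -/
theorem finite_dfiber {C : Set G.Arr} (hC : IsCompact C) (x : G.Arr) :
    {g | g ∈ C ∧ G.d g = x}.Finite := by
  set F := {g | g ∈ C ∧ G.d g = x} with hF
  have hFc : IsCompact F := by
    have : F = C ∩ G.d ⁻¹' {x} := by ext g; simp [hF]
    rw [this]
    exact hC.inter_right (isClosed_singleton.preimage G.continuous_d)
  choose U hUo hgU hinj _ using fun g : G.Arr => G.etale g
  obtain ⟨t, ht⟩ := hFc.elim_finite_subcover (fun g : ↥F => U g.val)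
    (fun g => hUo _) (fun g hg => mem_iUnion.2 ⟨⟨g, hg⟩, hgU g⟩)
  apply Set.Finite.subset (t.finite_toSet.image Subtype.val)
  intro g hg
  obtain ⟨i, hit, hgi⟩ := Set.mem_iUnion₂.1 (ht hg)
  have : g = i.val := by
    apply hinj i.val hgi (hgU i.val)
    rw [hg.2, (i.2 : i.val ∈ C ∧ G.d i.val = x).2]
  exact ⟨i, hit, this.symm⟩

theorem finite_rfiber {C : Set G.Arr} (hC : IsCompact C) (x : G.Arr) :
    {g | g ∈ C ∧ G.r g = x}.Finite := by
  have h1 : {h | h ∈ G.inv '' C ∧ G.d h = x}.Finite :=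
    G.finite_dfiber (hC.image G.continuous_inv) x
  apply Set.Finite.subset (h1.image G.inv)
  rintro g ⟨hgC, hgr⟩
  refine ⟨G.inv g, ⟨⟨⟨g, hgC, rfl⟩, by rw [G.d_inv, hgr]⟩, G.inv_inv g⟩⟩

theorem finite_d_preimage_finite {C : Set G.Arr} (hC : IsCompact C) {T : Set G.Arr}
    (hT : T.Finite) : {g | g ∈ C ∧ G.d g ∈ T}.Finite := by
  have : {g | g ∈ C ∧ G.d g ∈ T} = ⋃ x ∈ T, {g | g ∈ C ∧ G.d g = x} := by
    ext g; simp
  rw [this]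
  exact hT.biUnion (fun x _ => G.finite_dfiber hC x)

/-! #### Structure of elements of the algebra -/

theorem algebraSet_spec {k : Type} [Field k] {f : G.Arr → k} (hf : f ∈ G.AlgebraSet k) :
    IsLocallyConstant f ∧ ∃ S : Set G.Arr, IsCompact S ∧ Function.support f ⊆ S := by
  apply Submodule.span_induction (p := fun (f : G.Arr → k) _ =>
    IsLocallyConstant f ∧ ∃ S : Set G.Arr, IsCompact S ∧ Function.support f ⊆ S)
    ?_ ?_ ?_ ?_ hf
  · rintro f ⟨U, hUc, hUo, rfl⟩
    have hUcl : IsClosed U := hUc.isClosed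
    constructor
    · intro s
      by_cases h1 : (1 : k) ∈ s <;> by_cases h0 : (0 : k) ∈ s
      · have : (U.indicator (fun _ => (1:k))) ⁻¹' s = univ := by
          ext x; by_cases hx : x ∈ U <;> simp [indicator_apply, hx, h1, h0]
        rw [this]; exact isOpen_univ
      · have : (U.indicator (fun _ => (1:k))) ⁻¹' s = U := by
          ext x; by_cases hx : x ∈ U <;> simp [indicator_apply, hx, h1, h0]
        rw [this]; exact hUo
      · have : (U.indicator (fun _ => (1:k))) ⁻¹' s = Uᶜ := by
          ext x; by_cases hx : x ∈ U <;> simp [indicator_apply, hx, h1, h0]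
        rw [this]; exact hUcl.isOpen_compl
      · have : (U.indicator (fun _ => (1:k))) ⁻¹' s = ∅ := by
          ext x; by_cases hx : x ∈ U <;> simp [indicator_apply, hx, h1, h0]
        rw [this]; exact isOpen_empty
    · exact ⟨U, hUc, support_indicator_subset⟩
  · exact ⟨IsLocallyConstant.const 0, ∅, isCompact_empty, by simp⟩
  · rintro f g _ _ ⟨hf1, Sf, hSfc, hSf⟩ ⟨hg1, Sg, hSgc, hSg⟩
    refine ⟨hf1.add hg1, Sf ∪ Sg, hSfc.union hSgc, ?_⟩
    exact (Function.support_add _ _).trans (union_subset_union hSf hSg)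
  · rintro c f _ ⟨hf1, Sf, hSfc, hSf⟩
    refine ⟨?_, Sf, hSfc, ?_⟩
    · have : (c • f) = (fun y => c * y) ∘ f := by funext x; simp
      rw [this]
      exact hf1.comp _
    · intro x hx
      apply hSf
      simp only [Function.mem_support] at hx ⊢
      intro h0
      apply hx
      simp [h0]

theorem algebraSet_support_isClopen {k : Type} [Field k] {f : G.Arr → k}
    (hf : f ∈ G.AlgebraSet k) : IsOpen (Function.support f) ∧ IsClosed (Function.support f)
      ∧ IsCompact (Function.support f) := by
  obtain ⟨hlc, S, hSc, hSsub⟩ := G.algebraSet_spec hf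
  have ho : IsOpen (Function.support f) := by
    have : Function.support f = f ⁻¹' ({0}ᶜ) := by ext x; simp [Function.mem_support]
    rw [this]; exact hlc _
  have hcl : IsClosed (Function.support f) := by
    have : (Function.support f)ᶜ = f ⁻¹' {0} := by ext x; simp [Function.mem_support]
    rw [← isOpen_compl_iff, this]
    exact hlc _
  exact ⟨ho, hcl, hSc.of_isClosed_subset hcl hSsub⟩

end EtaleGroupoid

namespace EtaleGroupoid

open Classical

variable (G : EtaleGroupoid.{0})

/-! #### Convolution computations -/

theorem conv_indicator_right {k : Type} [Field k] (f : G.Arr → k) {K : Set G.Arr}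
    (hK : K ⊆ G.units) (x : G.Arr) :
    G.conv f (K.indicator fun _ => 1) x = if G.d x ∈ K then f x else 0 := by
  unfold conv
  have huniq : ∀ g, G.d g = G.d x →
      f (G.comp x (G.inv g)) * K.indicator (fun _ => (1:k)) g ≠ 0 → g = G.d x := by
    intro g hg hF
    have hgK : g ∈ K := by
      by_contra hgK
      apply hF
      simp [indicator_apply, hgK]
    rw [← G.d_unit (hK hgK)]
    exact hg
  rw [finsum_cond_eq_single (fun g => G.d g = G.d x)
    (fun g => f (G.comp x (G.inv g)) * K.indicator (fun _ => (1:k)) g) (G.d x) (G.d_d x) huniq]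
  rw [G.inv_unit (G.d_mem_units x), G.comp_unit_right]
  by_cases h : G.d x ∈ K <;> simp [indicator_apply, h]

theorem conv_indicator_left {k : Type} [Field k] (f : G.Arr → k) {L : Set G.Arr}
    (hL : L ⊆ G.units) (x : G.Arr) :
    G.conv (L.indicator fun _ => 1) f x = if G.r x ∈ L then f x else 0 := by
  unfold conv
  have huniq : ∀ g, G.d g = G.d x →
      L.indicator (fun _ => (1:k)) (G.comp x (G.inv g)) * f g ≠ 0 → g = x := by
    intro g hg hF
    have hmem : G.comp x (G.inv g) ∈ L := by
      by_contra hh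
      apply hF
      simp [indicator_apply, hh]
    have hu : G.comp x (G.inv g) ∈ G.units := hL hmem
    have hcomp : G.d x = G.r (G.inv g) := by rw [G.r_inv]; exact hg.symm
    have hdw : G.d (G.comp x (G.inv g)) = G.d (G.inv g) := G.d_comp _ _ hcomp
    have hw : G.comp x (G.inv g) = G.r g := by
      rw [← G.d_unit hu, hdw, G.d_inv]
    have hgx : G.comp (G.comp x (G.inv g)) g = x := by
      rw [G.comp_assoc x (G.inv g) g hcomp (G.d_inv g), G.inv_comp, hg, G.comp_unit_right]
    rw [hw, G.comp_unit_left] at hgx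
    exact hgx
  rw [finsum_cond_eq_single (fun g => G.d g = G.d x)
    (fun g => L.indicator (fun _ => (1:k)) (G.comp x (G.inv g)) * f g) x rfl huniq]
  rw [G.comp_inv]
  by_cases h : G.r x ∈ L <;> simp [indicator_apply, h]

/-- The action of the algebra on functions: `(f · m)(y) = ∑_{r g = y} f(g) m(d g)`. -/
noncomputable def rhoRaw {k : Type} [Field k] (f m : G.Arr → k) : G.Arr → k :=
  fun y => ∑ᶠ (g) (_ : G.r g = y), f g * m (G.d g)

theorem rhoRaw_indicator {k : Type} [Field k] {K : Set G.Arr} (hK : K ⊆ G.units)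
    (m : G.Arr → k) (y : G.Arr) :
    G.rhoRaw (K.indicator fun _ => 1) m y = if y ∈ K then m y else 0 := by
  unfold rhoRaw
  by_cases hy : y ∈ G.units
  · have huniq : ∀ g, G.r g = y → K.indicator (fun _ => (1:k)) g * m (G.d g) ≠ 0 → g = y := by
      intro g hg hF
      have hgK : g ∈ K := by
        by_contra hgK
        apply hF
        simp [indicator_apply, hgK]
      rw [← hg, G.r_unit (hK hgK)]
    rw [finsum_cond_eq_single (fun g => G.r g = y)
      (fun g => K.indicator (fun _ => (1:k)) g * m (G.d g)) y (G.r_unit hy) huniq]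
    by_cases h : y ∈ K <;> simp [indicator_apply, h, G.d_unit hy]
  · rw [finsum_cond_eq_zero, if_neg (fun h => hy (hK h))]
    intro g hg
    by_cases hgK : g ∈ K
    · exfalso
      apply hy
      rw [← hg, G.r_unit (hK hgK)]
      exact hK hgK
    · simp [indicator_apply, hgK]

variable [T2Space G.Arr]

/-- Support and finiteness of the result of the action. -/
theorem rhoRaw_mem {k : Type} [Field k] {f m : G.Arr → k} (hf : f ∈ G.AlgebraSet k)
    {x₀ : G.Arr} (hm₁ : Function.support m ⊆ G.orbit x₀) (hm₂ : (Function.support m).Finite) :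
    Function.support (G.rhoRaw f m) ⊆ G.orbit x₀ ∧ (Function.support (G.rhoRaw f m)).Finite := by
  obtain ⟨_, S, hSc, hSsub⟩ := G.algebraSet_spec hf
  have key : ∀ y, G.rhoRaw f m y ≠ 0 → ∃ g, G.r g = y ∧ g ∈ S ∧ G.d g ∈ Function.support m := by
    intro y hy
    obtain ⟨g, hg, hne⟩ := exists_of_finsum_cond_ne_zero hy
    refine ⟨g, hg, hSsub ?_, ?_⟩
    · intro h0; exact hne (by rw [h0, zero_mul])
    · simp only [Function.mem_support]
      intro h0; exact hne (by rw [h0, mul_zero])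
  constructor
  · intro y hy
    obtain ⟨g, hrg, _, hdg⟩ := key y (Function.mem_support.1 hy)
    rw [← hrg]
    exact G.orbit_trans (hm₁ hdg)
  · have hfin : {g | g ∈ S ∧ G.d g ∈ Function.support m}.Finite :=
      G.finite_d_preimage_finite hSc hm₂
    apply Set.Finite.subset (hfin.image G.r)
    intro y hy
    obtain ⟨g, hrg, hgS, hdg⟩ := key y (Function.mem_support.1 hy)
    exact ⟨g, ⟨hgS, hdg⟩, hrg⟩

theorem rhoRaw_add_left {k : Type} [Field k] {f₁ f₂ : G.Arr → k}
    (hf₁ : f₁ ∈ G.AlgebraSet k) (hf₂ : f₂ ∈ G.AlgebraSet k) (m : G.Arr → k) :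
    G.rhoRaw (f₁ + f₂) m = G.rhoRaw f₁ m + G.rhoRaw f₂ m := by
  funext y
  obtain ⟨_, S₁, hS₁c, hS₁⟩ := G.algebraSet_spec hf₁
  obtain ⟨_, S₂, hS₂c, hS₂⟩ := G.algebraSet_spec hf₂
  have hfin : {g | g ∈ S₁ ∪ S₂ ∧ G.r g = y}.Finite := G.finite_rfiber (hS₁c.union hS₂c) y
  set s := hfin.toFinset with hs
  have hmem : ∀ (f' : G.Arr → k), Function.support f' ⊆ S₁ ∪ S₂ →
      G.rhoRaw f' m y = ∑ g ∈ s, if G.r g = y then f' g * m (G.d g) else 0 := by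
    intro f' hsub
    apply finsum_cond_eq_sum
    intro g hg hne
    rw [hs, Set.Finite.mem_toFinset]
    refine ⟨hsub ?_, hg⟩
    simp only [Function.mem_support]
    intro h0; exact hne (by rw [h0, zero_mul])
  rw [Pi.add_apply,
    hmem (f₁ + f₂) ((Function.support_add _ _).trans (union_subset_union hS₁ hS₂)),
    hmem f₁ (hS₁.trans subset_union_left),
    hmem f₂ (hS₂.trans subset_union_right),
    ← Finset.sum_add_distrib]
  apply Finset.sum_congr rfl
  intro g _
  by_cases hg : G.r g = y <;> simp [hg, add_mul]

theorem rhoRaw_add_right {k : Type} [Field k] {f : G.Arr → k}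
    (hf : f ∈ G.AlgebraSet k) (m m' : G.Arr → k) :
    G.rhoRaw f (m + m') = G.rhoRaw f m + G.rhoRaw f m' := by
  funext y
  obtain ⟨_, S, hSc, hSsub⟩ := G.algebraSet_spec hf
  have hfin : {g | g ∈ S ∧ G.r g = y}.Finite := G.finite_rfiber hSc y
  set s := hfin.toFinset with hs
  have hmem : ∀ (m'' : G.Arr → k),
      G.rhoRaw f m'' y = ∑ g ∈ s, if G.r g = y then f g * m'' (G.d g) else 0 := by
    intro m''
    apply finsum_cond_eq_sum
    intro g hg hne
    rw [hs, Set.Finite.mem_toFinset]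
    refine ⟨hSsub ?_, hg⟩
    simp only [Function.mem_support]
    intro h0; exact hne (by rw [h0, zero_mul])
  rw [Pi.add_apply, hmem (m + m'), hmem m, hmem m', ← Finset.sum_add_distrib]
  apply Finset.sum_congr rfl
  intro g _
  by_cases hg : G.r g = y <;> simp [hg, mul_add]

end EtaleGroupoid

namespace EtaleGroupoid

variable (G : EtaleGroupoid.{0})

/-! #### Local sections of the domain map -/

theorem exists_section {U : Set G.Arr} (hU : IsOpen U) (hinj : Set.InjOn G.d U)
    (himg : ∀ V, V ⊆ U → IsOpen V → IsOpen (G.d '' V)) (hne : Nonempty G.Arr) :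
    ∃ s : G.Arr → G.Arr, ContinuousOn s (G.d '' U) ∧
      (∀ x ∈ G.d '' U, s x ∈ U ∧ G.d (s x) = x) ∧ (∀ g ∈ U, s (G.d g) = g) := by
  classical
  haveI := hne
  set s : G.Arr → G.Arr := fun x => if h : ∃ g ∈ U, G.d g = x then h.choose
    else Classical.arbitrary _ with hs
  have hspec : ∀ x ∈ G.d '' U, s x ∈ U ∧ G.d (s x) = x := by
    intro x hx
    obtain ⟨g, hg, rfl⟩ := hx
    have hex : ∃ g' ∈ U, G.d g' = G.d g := ⟨g, hg, rfl⟩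
    simp only [hs, dif_pos hex]
    exact ⟨hex.choose_spec.1, hex.choose_spec.2⟩
  have hsec : ∀ g ∈ U, s (G.d g) = g := by
    intro g hg
    have h := hspec (G.d g) ⟨g, hg, rfl⟩
    exact hinj h.1 hg h.2
  refine ⟨s, ?_, hspec, hsec⟩
  rw [continuousOn_iff]
  intro x hx W hW hsxW
  refine ⟨G.d '' (W ∩ U), himg _ inter_subset_right (hW.inter hU), ?_, ?_⟩
  · obtain ⟨hsU, hds⟩ := hspec x hx
    exact ⟨s x, ⟨hsxW, hsU⟩, hds⟩
  · rintro y ⟨⟨w, ⟨hwW, hwU⟩, rfl⟩, _⟩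
    exact mem_preimage.2 (by rw [hsec w hwU]; exact hwW)

theorem exists_compact_open_bisection (hop : IsOpen G.units) (hample : G.Ample)
    {g : G.Arr} {O : Set G.Arr} (hO : IsOpen O) (hgO : g ∈ O) :
    ∃ B : Set G.Arr, g ∈ B ∧ B ⊆ O ∧ IsCompact B ∧ IsOpen B ∧ Set.InjOn G.d B ∧
      Set.InjOn G.r B ∧ (∀ V, V ⊆ B → IsOpen V → IsOpen (G.d '' V)) := by
  obtain ⟨U₁, hU₁o, hgU₁, hinj₁, himg₁⟩ := G.etale g
  obtain ⟨U₂, hU₂o, hgU₂, hinj₂, _⟩ := G.etale (G.inv g)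
  set W := O ∩ U₁ ∩ G.inv ⁻¹' U₂ with hW
  have hWo : IsOpen W := (hO.inter hU₁o).inter (hU₂o.preimage G.continuous_inv)
  have hgW : g ∈ W := ⟨⟨hgO, hgU₁⟩, hgU₂⟩
  have hWinj : Set.InjOn G.d W := hinj₁.mono (fun x hx => hx.1.2)
  have hWimg : ∀ V, V ⊆ W → IsOpen V → IsOpen (G.d '' V) :=
    fun V hV hVo => himg₁ V (fun x hx => (hV hx).1.2) hVo
  have hWrinj : Set.InjOn G.r W := by
    intro x hx y hy hxy
    have h2 : G.inv x = G.inv y := by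
      apply hinj₂ hx.2 hy.2
      rw [G.d_inv, G.d_inv, hxy]
    have h3 := congrArg G.inv h2
    rwa [G.inv_inv, G.inv_inv] at h3
  have hdW : IsOpen (G.d '' W) := hWimg W (subset_refl _) hWo
  have hdWu : G.d '' W ⊆ G.units := by rintro x ⟨w, _, rfl⟩; exact G.d_mem_units w
  obtain ⟨K, hKsub, hKmem, hKc, hKo⟩ := hample.2 (G.d g) (G.d_mem_units g) (G.d '' W)
    (G.unitsOpen_of_isOpen hdWu hdW) ⟨g, hgW, rfl⟩
  obtain ⟨s, hscont, hsspec, hssec⟩ := G.exists_section hWo hWinj hWimg ⟨g⟩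
  set B := W ∩ G.d ⁻¹' K with hB
  have hBeq : B = s '' K := by
    ext b
    constructor
    · rintro ⟨hbW, hbK⟩
      exact ⟨G.d b, hbK, hssec b hbW⟩
    · rintro ⟨x, hxK, rfl⟩
      obtain ⟨h1, h2⟩ := hsspec x (hKsub hxK)
      exact ⟨h1, by rw [mem_preimage, h2]; exact hxK⟩
  refine ⟨B, ⟨hgW, hKmem⟩, fun x hx => hx.1.1.1, ?_, ?_,
    hWinj.mono inter_subset_left, hWrinj.mono inter_subset_left,
    fun V hV hVo => hWimg V (hV.trans inter_subset_left) hVo⟩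
  · rw [hBeq]
    exact hKc.image_of_continuousOn (hscont.mono hKsub)
  · exact hWo.inter ((G.unitsOpen_isOpen_s12 hop hKo).preimage G.continuous_d)

theorem section_image_open {V : Set G.Arr} (hV : IsOpen V) {σ : G.Arr → G.Arr}
    (hcont : ContinuousOn σ V) (hsec : ∀ z ∈ V, G.d (σ z) = z) {z₀ : G.Arr} (hz₀ : z₀ ∈ V) :
    ∃ O', IsOpen O' ∧ σ z₀ ∈ O' ∧ O' ⊆ σ '' V := by
  obtain ⟨U₀, hU₀o, hσU₀, hinj₀, _⟩ := G.etale (σ z₀)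
  obtain ⟨u, huo, hz₀u, husub⟩ := (continuousOn_iff.1 hcont) z₀ hz₀ U₀ hU₀o hσU₀
  refine ⟨U₀ ∩ G.d ⁻¹' (u ∩ V), hU₀o.inter ((huo.inter hV).preimage G.continuous_d),
    ⟨hσU₀, ?_⟩, ?_⟩
  · rw [mem_preimage, hsec z₀ hz₀]; exact ⟨hz₀u, hz₀⟩
  · rintro b ⟨hbU₀, hbW⟩
    rw [mem_preimage] at hbW
    have hσb : σ (G.d b) ∈ U₀ := husub ⟨hbW.1, hbW.2⟩
    have hb : b = σ (G.d b) := hinj₀ hbU₀ hσb (by rw [hsec _ hbW.2])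
    exact ⟨G.d b, hbW.2, hb.symm⟩

theorem continuousOn_comp₂ {V : Set G.Arr} {f g : G.Arr → G.Arr}
    (hf : ContinuousOn f V) (hg : ContinuousOn g V)
    (hcomp : ∀ z ∈ V, G.d (f z) = G.r (g z)) :
    ContinuousOn (fun z => G.comp (f z) (g z)) V := by
  rw [continuousOn_iff_continuous_restrict] at hf hg ⊢
  have hΦ : Continuous (fun z : ↥V => (⟨(f z.val, g z.val), hcomp z.val z.2⟩ :
      {p : G.Arr × G.Arr // G.d p.1 = G.r p.2})) := by
    apply Continuous.subtype_mk
    exact hf.prodMk hg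
  exact G.continuous_comp.comp hΦ

/-- The key use of effectiveness: the set of units over which two disjoint
`d`-bisections have arrows with equal domain and range has empty interior. -/
theorem bad_set_interior_empty (heff : G.Effective)
    {B₁ B₂ : Set G.Arr} (h₁o : IsOpen B₁) (h₁inj : Set.InjOn G.d B₁)
    (h₁img : ∀ V, V ⊆ B₁ → IsOpen V → IsOpen (G.d '' V))
    (h₂o : IsOpen B₂) (h₂inj : Set.InjOn G.d B₂)
    (h₂img : ∀ V, V ⊆ B₂ → IsOpen V → IsOpen (G.d '' V))
    (hdisj : ∀ x, x ∈ B₁ → x ∈ B₂ → False) :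
    interior ((fun p : G.Arr × G.Arr => G.d p.1) ''
      {p : G.Arr × G.Arr | p.1 ∈ B₁ ∧ p.2 ∈ B₂ ∧ G.d p.1 = G.d p.2 ∧ G.r p.1 = G.r p.2}) = ∅ := by
  by_contra hne
  obtain ⟨z₀, hz₀V⟩ := Set.nonempty_iff_ne_empty.2 hne
  set V := interior ((fun p : G.Arr × G.Arr => G.d p.1) ''
      {p : G.Arr × G.Arr | p.1 ∈ B₁ ∧ p.2 ∈ B₂ ∧ G.d p.1 = G.d p.2 ∧ G.r p.1 = G.r p.2}) with hVdef
  have hVo : IsOpen V := isOpen_interior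
  have hArr : Nonempty G.Arr := ⟨z₀⟩
  obtain ⟨s₁, hs₁c, hs₁spec, hs₁sec⟩ := G.exists_section h₁o h₁inj h₁img hArr
  obtain ⟨s₂, hs₂c, hs₂spec, hs₂sec⟩ := G.exists_section h₂o h₂inj h₂img hArr
  have hpair : ∀ z ∈ V, s₁ z ∈ B₁ ∧ s₂ z ∈ B₂ ∧ G.d (s₁ z) = z ∧ G.d (s₂ z) = z ∧
      G.r (s₁ z) = G.r (s₂ z) := by
    intro z hz
    obtain ⟨p, ⟨hp₁, hp₂, hpd, hpr⟩, hdp⟩ := interior_subset hz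
    change G.d p.1 = z at hdp
    have e₁ : s₁ z = p.1 := by rw [← hdp]; exact hs₁sec p.1 hp₁
    have e₂ : s₂ z = p.2 := by rw [← hdp, hpd]; exact hs₂sec p.2 hp₂
    refine ⟨e₁ ▸ hp₁, e₂ ▸ hp₂, by rw [e₁, hdp], by rw [e₂, ← hpd, hdp], by rw [e₁, e₂, hpr]⟩
  have hVsub₁ : V ⊆ G.d '' B₁ := fun z hz => ⟨s₁ z, (hpair z hz).1, (hpair z hz).2.2.1⟩
  have hVsub₂ : V ⊆ G.d '' B₂ := fun z hz => ⟨s₂ z, (hpair z hz).2.1, (hpair z hz).2.2.2.1⟩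
  set σ := fun z => G.comp (G.inv (s₂ z)) (s₁ z) with hσdef
  have hσc : ∀ z ∈ V, G.d (G.inv (s₂ z)) = G.r (s₁ z) := by
    intro z hz
    rw [G.d_inv, (hpair z hz).2.2.2.2]
  have hσsec : ∀ z ∈ V, G.d (σ z) = z ∧ G.r (σ z) = z := by
    intro z hz
    obtain ⟨h1, h2, h3, h4, h5⟩ := hpair z hz
    constructor
    · rw [hσdef]; rw [G.d_comp _ _ (hσc z hz), h3]
    · rw [hσdef]; rw [G.r_comp _ _ (hσc z hz), G.r_inv, h4]
  have hσcont : ContinuousOn σ V := by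
    apply G.continuousOn_comp₂ _ (hs₁c.mono hVsub₁) hσc
    exact G.continuous_inv.comp_continuousOn (hs₂c.mono hVsub₂)
  obtain ⟨O', hO'o, hO'mem, hO'sub⟩ :=
    G.section_image_open hVo hσcont (fun z hz => (hσsec z hz).1) hz₀V
  have hOiso : O' ⊆ {g : G.Arr | G.d g = G.r g} := by
    intro b hb
    obtain ⟨z, hz, rfl⟩ := hO'sub hb
    obtain ⟨hd, hr⟩ := hσsec z hz
    show G.d (σ z) = G.r (σ z)
    rw [hd, hr]
  have hOu : O' ⊆ G.units := by
    rw [← heff]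
    exact interior_maximal hOiso hO'o
  have hzu : σ z₀ = z₀ := by
    rw [← G.d_unit (hOu hO'mem)]
    exact (hσsec z₀ hz₀V).1
  obtain ⟨h1, h2, h3, h4, h5⟩ := hpair z₀ hz₀V
  have hzu' : G.comp (G.inv (s₂ z₀)) (s₁ z₀) = z₀ := by simpa [hσdef] using hzu
  have key : s₁ z₀ = s₂ z₀ := by
    have hassoc : G.comp (G.comp (s₂ z₀) (G.inv (s₂ z₀))) (s₁ z₀)
        = G.comp (s₂ z₀) (G.comp (G.inv (s₂ z₀)) (s₁ z₀)) :=
      G.comp_assoc _ _ _ (by rw [G.r_inv]) (by rw [G.d_inv, h5])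
    have e1 : G.comp (G.comp (s₂ z₀) (G.inv (s₂ z₀))) (s₁ z₀) = s₁ z₀ := by
      rw [G.comp_inv, ← h5, G.comp_unit_left]
    have e2 : G.comp (s₂ z₀) (G.comp (G.inv (s₂ z₀)) (s₁ z₀)) = s₂ z₀ := by
      rw [hzu']
      have h6 := G.comp_unit_right (s₂ z₀)
      rw [h4] at h6
      exact h6
    rw [← e1, hassoc, e2]
  exact hdisj (s₁ z₀) h1 (key ▸ h2)

end EtaleGroupoid

/-- A finite union of closed sets with empty interior has empty interior. -/
theorem interior_union_empty {X : Type} [TopologicalSpace X] {A B : Set X}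
    (hA : IsClosed A) (hiA : interior A = ∅) (hiB : interior B = ∅) :
    interior (A ∪ B) = ∅ := by
  rw [Set.eq_empty_iff_forall_notMem]
  intro x hx
  have hO : IsOpen (interior (A ∪ B)) := isOpen_interior
  have hsub : interior (A ∪ B) ⊆ A ∪ B := interior_subset
  have h1 : interior (A ∪ B) \ A ⊆ B := fun y hy => (hsub hy.1).elim (fun h => absurd h hy.2) id
  have h2 : interior (A ∪ B) \ A ⊆ interior B :=
    interior_maximal h1 (hO.sdiff hA)
  rw [hiB] at h2
  have h3 : interior (A ∪ B) ⊆ A := by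
    intro y hy
    by_contra hyA
    exact h2 ⟨hy, hyA⟩
  have h4 : interior (A ∪ B) ⊆ interior A := interior_maximal h3 hO
  rw [hiA] at h4
  exact h4 hx

theorem interior_finite_union_empty {X : Type} [TopologicalSpace X] {ι : Type}
    (s : Finset ι) (f : ι → Set X)
    (h : ∀ i ∈ s, IsClosed (f i) ∧ interior (f i) = ∅) :
    interior (⋃ i ∈ s, f i) = ∅ := by
  classical
  revert h
  induction s using Finset.induction_on with
  | empty => intro _; simp
  | @insert a t ha ih =>
      intro h
      have hrw : (⋃ i ∈ insert a t, f i) = f a ∪ ⋃ i ∈ t, f i := by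
        simp [Set.biUnion_insert]
      rw [hrw]
      exact interior_union_empty (h a (Finset.mem_insert_self a t)).1
        (h a (Finset.mem_insert_self a t)).2
        (ih (fun i hi => h i (Finset.mem_insert_of_mem hi)))

namespace EtaleGroupoid

variable (G : EtaleGroupoid.{0})

theorem unitsDense_iff (hop : IsOpen G.units) {X : Set G.Arr} (hX : X ⊆ G.units) :
    G.UnitsDense X ↔ ∀ V : Set G.Arr, IsOpen V → (V ∩ G.units).Nonempty → (V ∩ X).Nonempty := by
  constructor
  · intro hd V hV ⟨v, hvV, hvu⟩
    unfold UnitsDense at hd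
    have hno : IsOpen (Subtype.val ⁻¹' V : Set ↥G.units) := hV.preimage continuous_subtype_val
    have hne : (Subtype.val ⁻¹' V : Set ↥G.units).Nonempty := ⟨⟨v, hvu⟩, hvV⟩
    obtain ⟨u, huV, huX⟩ := hd.inter_open_nonempty _ hno hne
    exact ⟨u.val, huV, huX⟩
  · intro h
    unfold UnitsDense
    rw [dense_iff_inter_open]
    rintro U hU ⟨u, hu⟩
    obtain ⟨V, hV, hVeq⟩ := isOpen_induced_iff.1 hU
    have hVu : (V ∩ G.units).Nonempty := by
      refine ⟨u.val, ?_, u.2⟩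
      rw [← hVeq] at hu
      exact hu
    obtain ⟨w, hwV, hwX⟩ := h V hV hVu
    refine ⟨⟨w, hX hwX⟩, ?_, hwX⟩
    rw [← hVeq]
    exact hwV

theorem locallyCompact_units (hample : G.Ample) : LocallyCompactSpace ↥G.units := by
  constructor
  intro x n hn
  obtain ⟨W, hWsub, hWo, hxW⟩ := mem_nhds_iff.1 hn
  have hU : G.UnitsOpen (Subtype.val '' W) := by
    constructor
    · rintro y ⟨w, _, rfl⟩; exact w.2
    · rw [Subtype.val_injective.preimage_image W]
      exact hWo
  obtain ⟨K, hKsub, hKmem, hKc, hKo⟩ := hample.2 x.val x.2 (Subtype.val '' W) hU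
    ⟨x, hxW, rfl⟩
  refine ⟨Subtype.val ⁻¹' K, ?_, ?_, ?_⟩
  · exact (hKo.2.mem_nhds (by exact hKmem))
  · intro y hy
    obtain ⟨w, hwW, hw⟩ := hKsub hy
    have : y = w := Subtype.val_injective hw.symm
    rw [this]
    exact hWsub hwW
  · rw [Topology.IsEmbedding.subtypeVal.isCompact_iff]
    have : Subtype.val '' (Subtype.val ⁻¹' K : Set ↥G.units) = K := by
      apply Set.image_preimage_eq_of_subset
      rintro y hy
      exact ⟨⟨y, hKo.1 hy⟩, rfl⟩
    rw [this]
    exact hKc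

theorem exists_dense_orbit (htrans : G.TopTransitive) (hop : IsOpen G.units)
    (hample : G.Ample) [SecondCountableTopology ↥G.units] (hne : G.units.Nonempty) :
    ∃ x₀ ∈ G.units, G.UnitsDense (G.orbit x₀) := by
  haveI : T2Space ↥G.units := hample.1
  haveI : LocallyCompactSpace ↥G.units := G.locallyCompact_units hample
  obtain ⟨b, hbc, hbne, hb⟩ := TopologicalSpace.exists_countable_basis ↥G.units
  haveI : Countable b := hbc.to_subtype
  set Wf : b → Set G.Arr := fun β => G.r '' (G.d ⁻¹' (Subtype.val '' β.val)) with hWf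
  have hV : ∀ β : b, IsOpen (Subtype.val '' β.val : Set G.Arr) ∧
      (Subtype.val '' β.val : Set G.Arr) ⊆ G.units := by
    intro β
    constructor
    · apply G.unitsOpen_isOpen_s12 hop
      constructor
      · rintro y ⟨w, _, rfl⟩; exact w.2
      · rw [Subtype.val_injective.preimage_image]
        exact hb.isOpen β.2
    · rintro y ⟨w, _, rfl⟩; exact w.2
  have hWo : ∀ β : b, G.UnitsOpen (Wf β) := by
    intro β
    apply G.unitsOpen_of_isOpen
    · rintro y ⟨g, _, rfl⟩; exact G.r_mem_units g
    · exact G.isOpenMap_r _ ((hV β).1.preimage G.continuous_d)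
  have hWinv : ∀ β : b, G.Invariant (Wf β) := by
    rintro β g ⟨h, hh, hrh⟩
    refine ⟨G.comp g h, ?_, ?_⟩
    · rw [Set.mem_preimage] at hh ⊢
      rw [G.d_comp g h hrh.symm]
      exact hh
    · rw [G.r_comp g h hrh.symm]
  have hWd : ∀ β : b, Dense (Subtype.val ⁻¹' (Wf β) : Set ↥G.units) := by
    intro β
    apply htrans _ (hWo β) (hWinv β)
    obtain ⟨u, hu⟩ : β.val.Nonempty :=
      Set.nonempty_iff_ne_empty.2 (fun h0 => hbne (h0 ▸ β.2))
    refine ⟨u.val, u.val, ?_, G.r_unit u.2⟩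
    rw [Set.mem_preimage, G.d_unit u.2]
    exact ⟨u, hu, rfl⟩
  have hdense : Dense (⋂ β : b, (Subtype.val ⁻¹' (Wf β) : Set ↥G.units)) :=
    dense_iInter_of_isOpen (fun β => (hWo β).2) hWd
  haveI : Nonempty ↥G.units := ⟨⟨hne.choose, hne.choose_spec⟩⟩
  obtain ⟨x₀, hx₀⟩ := hdense.nonempty
  refine ⟨x₀.val, x₀.2, ?_⟩
  unfold UnitsDense
  rw [hb.dense_iff]
  intro o ho hone
  have hx₀o := Set.mem_iInter.1 hx₀ ⟨o, ho⟩
  rw [Set.mem_preimage] at hx₀o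
  obtain ⟨g, hg, hrg⟩ := hx₀o
  rw [Set.mem_preimage] at hg
  obtain ⟨u, hu, huv⟩ := hg
  refine ⟨u, hu, ?_⟩
  rw [Set.mem_preimage, huv]
  exact ⟨G.inv g, by rw [G.d_inv, hrg], by rw [G.r_inv]⟩

end EtaleGroupoid

namespace EtaleGroupoid

open Classical

variable (G : EtaleGroupoid.{0}) [T2Space G.Arr]

theorem rhoRaw_conv {k : Type} [Field k] {f f' m : G.Arr → k}
    (hf : f ∈ G.AlgebraSet k) (hf' : f' ∈ G.AlgebraSet k)
    (hm : (Function.support m).Finite) :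
    G.rhoRaw (G.conv f f') m = G.rhoRaw f (G.rhoRaw f' m) := by
  classical
  funext y
  obtain ⟨-, Sf, hSfc, hSf⟩ := G.algebraSet_spec hf
  obtain ⟨-, Sf', hSf'c, hSf'⟩ := G.algebraSet_spec hf'
  have hF₁fin : {u | u ∈ Sf ∧ G.r u = y}.Finite := G.finite_rfiber hSfc y
  have hF₂fin : {v | v ∈ Sf' ∧ G.d v ∈ Function.support m}.Finite :=
    G.finite_d_preimage_finite hSf'c hm
  set F₁ := hF₁fin.toFinset with hF₁
  set F₂ := hF₂fin.toFinset with hF₂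
  set G₀ := Finset.image (fun p : G.Arr × G.Arr => G.comp p.1 p.2) (F₁ ×ˢ F₂) with hG₀
  have hL1 : G.rhoRaw (G.conv f f') m y
      = ∑ g ∈ G₀, if G.r g = y then G.conv f f' g * m (G.d g) else 0 := by
    apply finsum_cond_eq_sum
    intro g hrg hne
    have hconv : G.conv f f' g ≠ 0 := fun h0 => hne (by rw [h0, zero_mul])
    have hmg : m (G.d g) ≠ 0 := fun h0 => hne (by rw [h0, mul_zero])
    obtain ⟨v, hdv, hv⟩ := exists_of_finsum_cond_ne_zero hconv
    have hfu : f (G.comp g (G.inv v)) ≠ 0 := fun h0 => hv (by rw [h0, zero_mul])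
    have hfv : f' v ≠ 0 := fun h0 => hv (by rw [h0, mul_zero])
    rw [hG₀, Finset.mem_image]
    refine ⟨(G.comp g (G.inv v), v), ?_, ?_⟩
    · rw [Finset.mem_product]
      constructor
      · rw [hF₁, Set.Finite.mem_toFinset]
        exact ⟨hSf hfu, by rw [G.r_comp_inv hdv, hrg]⟩
      · rw [hF₂, Set.Finite.mem_toFinset]
        exact ⟨hSf' hfv, by rw [hdv]; exact Function.mem_support.2 hmg⟩
    · exact G.comp_inv_cancel' hdv
  have hL2 : ∀ g ∈ G₀, (if G.r g = y then G.conv f f' g * m (G.d g) else 0)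
      = ∑ v ∈ F₂, if (G.r g = y ∧ G.d v = G.d g)
          then f (G.comp g (G.inv v)) * f' v * m (G.d g) else 0 := by
    intro g _
    by_cases hrg : G.r g = y
    · by_cases hmg : m (G.d g) = 0
      · rw [if_pos hrg, hmg, mul_zero]
        symm
        apply Finset.sum_eq_zero
        intro v _
        by_cases hc : G.r g = y ∧ G.d v = G.d g
        · rw [if_pos hc]
          exact mul_zero _
        · rw [if_neg hc]
      · have hcv : G.conv f f' g = ∑ v ∈ F₂,
            if G.d v = G.d g then f (G.comp g (G.inv v)) * f' v else 0 := by
          apply finsum_cond_eq_sum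
          intro v hdv hv
          have hfv : f' v ≠ 0 := fun h0 => hv (by rw [h0, mul_zero])
          rw [hF₂, Set.Finite.mem_toFinset]
          exact ⟨hSf' hfv, by rw [hdv]; exact Function.mem_support.2 hmg⟩
        rw [if_pos hrg, hcv, Finset.sum_mul]
        apply Finset.sum_congr rfl
        intro v _
        by_cases hdv : G.d v = G.d g
        · simp [hdv, hrg]
        · simp [hdv, hrg]
    · rw [if_neg hrg]
      symm
      apply Finset.sum_eq_zero
      intro v _
      rw [if_neg (fun hc => hrg hc.1)]
  have hR1 : G.rhoRaw f (G.rhoRaw f' m) y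
      = ∑ u ∈ F₁, if G.r u = y then f u * G.rhoRaw f' m (G.d u) else 0 := by
    apply finsum_cond_eq_sum
    intro u hru hne
    have hfu : f u ≠ 0 := fun h0 => hne (by rw [h0, zero_mul])
    rw [hF₁, Set.Finite.mem_toFinset]
    exact ⟨hSf hfu, hru⟩
  have hR2 : ∀ u ∈ F₁, (if G.r u = y then f u * G.rhoRaw f' m (G.d u) else 0)
      = ∑ v ∈ F₂, if (G.r u = y ∧ G.r v = G.d u) then f u * (f' v * m (G.d v)) else 0 := by
    intro u _
    by_cases hru : G.r u = y
    · have hrv : G.rhoRaw f' m (G.d u) = ∑ v ∈ F₂,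
          if G.r v = G.d u then f' v * m (G.d v) else 0 := by
        apply finsum_cond_eq_sum
        intro v hv hne
        have h1 : f' v ≠ 0 := fun h0 => hne (by rw [h0, zero_mul])
        have h2 : m (G.d v) ≠ 0 := fun h0 => hne (by rw [h0, mul_zero])
        rw [hF₂, Set.Finite.mem_toFinset]
        exact ⟨hSf' h1, h2⟩
      rw [if_pos hru, hrv, Finset.mul_sum]
      apply Finset.sum_congr rfl
      intro v _
      by_cases hv : G.r v = G.d u
      · simp [hv, hru]
      · simp [hv, hru]
    · rw [if_neg hru]
      symm
      apply Finset.sum_eq_zero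
      intro v _
      rw [if_neg (fun hc => hru hc.1)]
  rw [hL1, Finset.sum_congr rfl hL2, hR1, Finset.sum_congr rfl hR2,
    ← Finset.sum_product', ← Finset.sum_product']
  apply Finset.sum_bij_ne_zero (fun p _ _ => (G.comp p.1 (G.inv p.2), p.2))
  · rintro ⟨g, v⟩ hp hne
    simp only at hne
    rw [Finset.mem_product] at hp
    have hcond : G.r g = y ∧ G.d v = G.d g := by
      by_contra hc
      rw [if_neg hc] at hne
      exact hne rfl
    rw [if_pos hcond] at hne
    have h1 : f (G.comp g (G.inv v)) ≠ 0 := fun h0 => hne (by rw [h0, zero_mul, zero_mul])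
    rw [Finset.mem_product]
    constructor
    · rw [hF₁, Set.Finite.mem_toFinset]
      exact ⟨hSf h1, by rw [G.r_comp_inv hcond.2, hcond.1]⟩
    · exact hp.2
  · rintro ⟨g, v⟩ h₁₁ h₁₂ ⟨g', v'⟩ h₂₁ h₂₂ heq
    simp only at h₁₂ h₂₂ heq
    have hc1 : G.r g = y ∧ G.d v = G.d g := by
      by_contra hc
      rw [if_neg hc] at h₁₂
      exact h₁₂ rfl
    have hc2 : G.r g' = y ∧ G.d v' = G.d g' := by
      by_contra hc
      rw [if_neg hc] at h₂₂
      exact h₂₂ rfl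
    have hv : v = v' := congrArg Prod.snd heq
    subst hv
    have hg : G.comp g (G.inv v) = G.comp g' (G.inv v) := congrArg Prod.fst heq
    have hgg := congrArg (fun w => G.comp w v) hg
    rw [G.comp_inv_cancel' hc1.2, G.comp_inv_cancel' hc2.2] at hgg
    rw [Prod.ext_iff]
    exact ⟨hgg, rfl⟩
  · rintro ⟨u, v⟩ hq hne
    simp only at hne
    rw [Finset.mem_product] at hq
    have hcond : G.r u = y ∧ G.r v = G.d u := by
      by_contra hc
      rw [if_neg hc] at hne
      exact hne rfl
    rw [if_pos hcond] at hne
    have hfu : f u ≠ 0 := fun h0 => hne (by rw [h0, zero_mul])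
    have hfv : f' v ≠ 0 := fun h0 => hne (by rw [h0, zero_mul, mul_zero])
    have hmv : m (G.d v) ≠ 0 := fun h0 => hne (by rw [h0, mul_zero, mul_zero])
    refine ⟨(G.comp u v, v), ?_, ?_, ?_⟩
    · rw [Finset.mem_product]
      refine ⟨?_, hq.2⟩
      rw [hG₀, Finset.mem_image]
      exact ⟨(u, v), Finset.mem_product.2 ⟨hq.1, hq.2⟩, rfl⟩
    · simp only
      have hd : G.d v = G.d (G.comp u v) := (G.d_comp u v hcond.2.symm).symm
      have hr : G.r (G.comp u v) = y := by
        rw [G.r_comp u v hcond.2.symm]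
        exact hcond.1
      rw [if_pos ⟨hr, hd⟩, G.comp_cancel_inv' hcond.2.symm, G.d_comp u v hcond.2.symm]
      exact mul_ne_zero (mul_ne_zero hfu hfv) hmv
    · simp only
      rw [Prod.ext_iff]
      exact ⟨G.comp_cancel_inv' hcond.2.symm, rfl⟩
  · rintro ⟨g, v⟩ hp hne
    simp only at hne ⊢
    have hcond : G.r g = y ∧ G.d v = G.d g := by
      by_contra hc
      rw [if_neg hc] at hne
      exact hne rfl
    have hd : G.d (G.comp g (G.inv v)) = G.r v := G.d_comp_inv hcond.2
    have hr : G.r (G.comp g (G.inv v)) = y := by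
      rw [G.r_comp_inv hcond.2]
      exact hcond.1
    rw [if_pos hcond, if_pos ⟨hr, hd.symm⟩, ← hcond.2, mul_assoc]

end EtaleGroupoid

theorem primitive_implies_prime {A : Type} [NonUnitalRing A]
    (h : IsPrimitiveRingE A) : IsPrimeRingE A := by
  obtain ⟨M, _, ρ, hadd₁, hadd₂, hmul, ⟨a₀, m₀, hne⟩, hsimp, hfaith⟩ := h
  have hρ0 : ∀ m, ρ 0 m = 0 := by
    intro m
    have h1 : ρ 0 m = ρ 0 m + ρ 0 m := by
      have := hadd₁ 0 0 m
      rwa [add_zero] at this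
    have h2 : ρ 0 m + 0 = ρ 0 m + ρ 0 m := by rw [add_zero]; exact h1
    exact (add_left_cancel h2).symm
  have hρm0 : ∀ a, ρ a 0 = 0 := by
    intro a
    have h1 : ρ a 0 = ρ a 0 + ρ a 0 := by
      have := hadd₂ a 0 0
      rwa [add_zero] at this
    have h2 : ρ a 0 + 0 = ρ a 0 + ρ a 0 := by rw [add_zero]; exact h1
    exact (add_left_cancel h2).symm
  have hρneg : ∀ a m, ρ a (-m) = - ρ a m := by
    intro a m
    have h1 : ρ a m + ρ a (-m) = 0 := by
      rw [← hadd₂ a m (-m), add_neg_cancel, hρm0]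
    exact eq_neg_of_add_eq_zero_right h1
  constructor
  · refine ⟨a₀, fun h0 => hne ?_⟩
    rw [h0, hρ0]
  · intro a b hab
    by_cases hb : b = 0
    · right; exact hb
    left
    have step1 : ∀ x, a * x = 0 := by
      set N₁ : AddSubgroup M := {
        carrier := {m | ∀ x, ρ a (ρ x m) = 0}
        add_mem' := by
          intro m m' hm hm'
          simp only [Set.mem_setOf_eq] at hm hm' ⊢
          intro x
          rw [hadd₂ x m m', hadd₂ a _ _, hm x, hm' x, add_zero]
        zero_mem' := by
          simp only [Set.mem_setOf_eq]
          intro x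
          rw [hρm0 x, hρm0 a]
        neg_mem' := by
          intro m hm
          simp only [Set.mem_setOf_eq] at hm ⊢
          intro x
          rw [hρneg x m, hρneg a _, hm x, neg_zero]
      } with hN₁
      have hinv : ∀ c : A, ∀ m ∈ N₁, ρ c m ∈ N₁ := by
        intro c m hm
        show ∀ x, ρ a (ρ x (ρ c m)) = 0
        intro x
        rw [← hmul x c m]
        exact hm (x * c)
      obtain ⟨m₁, hm₁⟩ : ∃ m, ρ b m ≠ 0 := by
        by_contra hc
        push_neg at hc
        exact hb (hfaith b hc)
      have hbmem : ρ b m₁ ∈ N₁ := by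
        show ∀ x, ρ a (ρ x (ρ b m₁)) = 0
        intro x
        rw [← hmul x b m₁, ← hmul a (x * b) m₁, ← mul_assoc, hab x, hρ0]
      rcases hsimp N₁ hinv with hbot | htop
      · exfalso
        rw [hbot, AddSubgroup.mem_bot] at hbmem
        exact hm₁ hbmem
      · intro x
        apply hfaith
        intro m
        have hmN : m ∈ N₁ := by rw [htop]; trivial
        rw [hmul a x m]
        exact hmN x
    set N₂ := AddSubgroup.closure {m : M | ∃ x m', m = ρ x m'} with hN₂
    have hinv₂ : ∀ c : A, ∀ m ∈ N₂, ρ c m ∈ N₂ := by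
      intro c m hm
      refine AddSubgroup.closure_induction ?_ ?_ ?_ ?_ hm
      · rintro m' ⟨x, m'', rfl⟩
        exact AddSubgroup.subset_closure ⟨c * x, m'', (hmul c x m'').symm⟩
      · rw [hρm0]; exact zero_mem _
      · intro m₁ m₂ _ _ h1 h2
        rw [hadd₂]
        exact add_mem h1 h2
      · intro m' _ h1
        rw [hρneg]
        exact neg_mem h1
    rcases hsimp N₂ hinv₂ with hbot | htop
    · exfalso
      have hmem : ρ a₀ m₀ ∈ N₂ := AddSubgroup.subset_closure ⟨a₀, m₀, rfl⟩
      rw [hbot, AddSubgroup.mem_bot] at hmem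
      exact hne hmem
    · apply hfaith
      intro m
      have hm : m ∈ N₂ := by rw [htop]; trivial
      refine AddSubgroup.closure_induction ?_ ?_ ?_ ?_ hm
      · rintro m' ⟨x, m'', rfl⟩
        rw [← hmul a x m'', step1 x, hρ0]
      · exact hρm0 a
      · intro m₁ m₂ _ _ h1 h2
        rw [hadd₂, h1, h2, add_zero]
      · intro m' _ h1
        rw [hρneg, h1, neg_zero]

open Function Set in
open EtaleGroupoid in
/-- For an effective Hausdorff ample groupoid with second
countable unit space and a field `k`, the convolution algebra `kG` (realized as
any ring `A` isomorphic to the span of compactly supported characteristic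
functions with convolution product) is prime iff it is primitive. -/
theorem stmt12 (k : Type) [Field k] (G : EtaleGroupoid.{0}) [T2Space G.Arr]
    (hample : G.Ample) (heff : G.Effective)
    [SecondCountableTopology ↥G.units]
    (A : Type) [NonUnitalRing A] (φ : A → (G.Arr → k))
    (hadd : ∀ a b : A, φ (a + b) = φ a + φ b)
    (hmul : ∀ a b : A, φ (a * b) = G.conv (φ a) (φ b))
    (hinj : Function.Injective φ)
    (hrange : Set.range φ = G.AlgebraSet k) :
    IsPrimeRingE A ↔ IsPrimitiveRingE A := by
  classical
  have hop : IsOpen G.units := G.isOpen_units heff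
  have hφ0 : φ 0 = 0 := by
    have h1 : φ 0 = φ 0 + φ 0 := by
      have := hadd 0 0
      rwa [add_zero] at this
    have h2 : φ 0 + 0 = φ 0 + φ 0 := by rw [add_zero]; exact h1
    exact (add_left_cancel h2).symm
  have hsurj : ∀ u ∈ G.AlgebraSet k, ∃ a, φ a = u := by
    intro u hu
    rw [← hrange] at hu
    exact hu
  have hφmem : ∀ a : A, φ a ∈ G.AlgebraSet k := by
    intro a
    rw [← hrange]
    exact Set.mem_range_self a
  have hind : ∀ (U : Set G.Arr), IsCompact U → IsOpen U →
      (U.indicator (fun _ => (1:k))) ∈ G.AlgebraSet k :=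
    fun U hc ho => Submodule.subset_span ⟨U, hc, ho, rfl⟩
  constructor
  swap
  · exact primitive_implies_prime
  intro hprime
  obtain ⟨⟨a₁, ha₁⟩, hpr⟩ := hprime
  have hfne : φ a₁ ≠ 0 := fun h0 => ha₁ (hinj (h0.trans hφ0.symm))
  obtain ⟨g₁, hg₁⟩ : ∃ g, φ a₁ g ≠ 0 := by
    by_contra hc
    push_neg at hc
    exact hfne (funext fun g => hc g)
  have huniv_ne : G.units.Nonempty := ⟨G.d g₁, G.d_mem_units g₁⟩
  -- topological transitivity
  have htrans : G.TopTransitive := by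
    intro U hU hUinv hUne
    rw [G.unitsDense_iff hop hU.1]
    intro V hV hVu
    by_contra hVU
    rw [Set.not_nonempty_iff_eq_empty] at hVU
    obtain ⟨x, hxU⟩ := hUne
    obtain ⟨K, hKU, hxK, hKc, hKo⟩ := hample.2 x (hU.1 hxU) U hU hxU
    obtain ⟨v, hvV, hvu⟩ := hVu
    obtain ⟨L, hLV, hvL, hLc, hLo⟩ := hample.2 v hvu (V ∩ G.units)
      (G.unitsOpen_of_isOpen inter_subset_right (hV.inter hop)) ⟨hvV, hvu⟩
    obtain ⟨aK, haK⟩ := hsurj _ (hind K hKc (G.unitsOpen_isOpen_s12 hop hKo))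
    obtain ⟨bL, hbL⟩ := hsurj _ (hind L hLc (G.unitsOpen_isOpen_s12 hop hLo))
    have hzero : ∀ c : A, bL * c * aK = 0 := by
      intro c
      apply hinj
      rw [hφ0, hmul (bL * c) aK, hmul bL c, hbL, haK]
      funext w
      rw [G.conv_indicator_right _ hKo.1 w]
      by_cases hdw : G.d w ∈ K
      · rw [if_pos hdw, G.conv_indicator_left _ hLo.1 w]
        have hrw : G.r w ∈ U := hUinv w (hKU hdw)
        have hrL : G.r w ∉ L := by
          intro hrL
          exact Set.eq_empty_iff_forall_notMem.1 hVU (G.r w) ⟨(hLV hrL).1, hrw⟩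
        rw [if_neg hrL]
        rfl
      · rw [if_neg hdw]
        rfl
    rcases hpr bL aK hzero with h0 | h0
    · have hv1 : φ bL v = 0 := by rw [h0, hφ0]; rfl
      rw [hbL, Set.indicator_of_mem hvL] at hv1
      exact one_ne_zero hv1
    · have hv1 : φ aK x = 0 := by rw [h0, hφ0]; rfl
      rw [haK, Set.indicator_of_mem hxK] at hv1
      exact one_ne_zero hv1
  -- dense orbit
  obtain ⟨x₀, hx₀u, hx₀dense⟩ := G.exists_dense_orbit htrans hop hample huniv_ne
  set O := G.orbit x₀ with hOdef
  -- the module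
  set Msub : AddSubgroup (G.Arr → k) := {
    carrier := {m | Function.support m ⊆ O ∧ (Function.support m).Finite}
    add_mem' := by
      intro m m' hm hm'
      simp only [Set.mem_setOf_eq] at hm hm' ⊢
      exact ⟨(Function.support_add m m').trans (Set.union_subset hm.1 hm'.1),
        Set.Finite.subset (hm.2.union hm'.2) (Function.support_add m m')⟩
    zero_mem' := by
      simp only [Set.mem_setOf_eq]
      constructor
      · intro y hy
        exact absurd rfl hy
      · apply Set.Finite.subset Set.finite_empty
        intro y hy
        exact absurd rfl hy
    neg_mem' := by
      intro m hm
      simp only [Set.mem_setOf_eq] at hm ⊢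
      have hsupp : Function.support (-m) = Function.support m := by
        ext y
        simp [Function.mem_support]
      rw [hsupp]
      exact hm
  } with hMsub
  have hmem_iff : ∀ m : G.Arr → k,
      m ∈ Msub ↔ (Function.support m ⊆ O ∧ (Function.support m).Finite) := fun m => Iff.rfl
  set ρ : A → ↥Msub → ↥Msub := fun a m =>
    ⟨G.rhoRaw (φ a) m.val,
      (hmem_iff _).2 (G.rhoRaw_mem (hφmem a) ((hmem_iff _).1 m.2).1 ((hmem_iff _).1 m.2).2)⟩
    with hρdef
  have hδmem : ∀ (z : G.Arr) (c : k), z ∈ O →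
      (fun y => if y = z then c else 0) ∈ Msub := by
    intro z c hz
    rw [hmem_iff]
    constructor
    · intro y hy
      rcases eq_or_ne y z with rfl | hne'
      · exact hz
      · exact absurd (if_neg hne') hy
    · apply Set.Finite.subset (Set.finite_singleton z)
      intro y hy
      rcases eq_or_ne y z with rfl | hne'
      · exact rfl
      · exact absurd (if_neg hne') hy
  refine ⟨↥Msub, inferInstance, ρ, ?_, ?_, ?_, ?_, ?_, ?_⟩
  · -- additivity in a
    intro a b m
    apply Subtype.ext
    show G.rhoRaw (φ (a + b)) m.val = G.rhoRaw (φ a) m.val + G.rhoRaw (φ b) m.val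
    rw [hadd a b, G.rhoRaw_add_left (hφmem a) (hφmem b)]
  · -- additivity in m
    intro a m m'
    apply Subtype.ext
    show G.rhoRaw (φ a) (m.val + m'.val) = G.rhoRaw (φ a) m.val + G.rhoRaw (φ a) m'.val
    rw [G.rhoRaw_add_right (hφmem a)]
  · -- multiplicativity
    intro a b m
    apply Subtype.ext
    show G.rhoRaw (φ (a * b)) m.val = G.rhoRaw (φ a) (G.rhoRaw (φ b) m.val)
    rw [hmul a b, G.rhoRaw_conv (hφmem a) (hφmem b) ((hmem_iff _).1 m.2).2]
  · -- nontriviality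
    obtain ⟨K, hK1, hx₀K, hKc, hKo⟩ := hample.2 x₀ hx₀u G.units
      (G.unitsOpen_of_isOpen (subset_refl _) hop) hx₀u
    obtain ⟨aK, haK⟩ := hsurj _ (hind K hKc (G.unitsOpen_isOpen_s12 hop hKo))
    have hx₀O : x₀ ∈ O := G.mem_orbit_self hx₀u
    refine ⟨aK, ⟨fun y => if y = x₀ then 1 else 0, hδmem x₀ 1 hx₀O⟩, ?_⟩
    intro h0
    have h1 := congrArg (fun mm : ↥Msub => mm.val x₀) h0
    simp only [hρdef] at h1
    have h2 : G.rhoRaw (φ aK) (fun y => if y = x₀ then (1:k) else 0) x₀ = 1 := by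
      rw [haK, G.rhoRaw_indicator hKo.1]
      rw [if_pos hx₀K, if_pos rfl]
    rw [h2] at h1
    exact one_ne_zero h1
  · -- simplicity
    intro N hN
    by_cases hNbot : N = ⊥
    · left; exact hNbot
    right
    obtain ⟨m₀M, hm₀N, hm₀ne⟩ : ∃ m ∈ N, m ≠ 0 := by
      by_contra hc
      push_neg at hc
      exact hNbot ((AddSubgroup.eq_bot_iff_forall N).2 hc)
    obtain ⟨y₀, hy₀⟩ : ∃ y, m₀M.val y ≠ 0 := by
      by_contra hc
      push_neg at hc
      exact hm₀ne (Subtype.ext (funext hc))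
    have hy₀O : y₀ ∈ O := ((hmem_iff _).1 m₀M.2).1 hy₀
    have hy₀u : y₀ ∈ G.units := G.orbit_subset_units x₀ hy₀O
    haveI hT2u : T2Space ↥G.units := hample.1
    set R : Set G.Arr := Function.support m₀M.val \ {y₀} with hR
    have hRfin : R.Finite := Set.Finite.diff ((hmem_iff _).1 m₀M.2).2
    have hWopen : G.UnitsOpen (G.units \ R) := by
      constructor
      · exact Set.diff_subset
      · have heq : (Subtype.val ⁻¹' (G.units \ R) : Set ↥G.units)
            = (Subtype.val ⁻¹' R)ᶜ := by
          ext u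
          simp [u.2]
        rw [heq]
        exact (Set.Finite.isClosed
          (hRfin.preimage (Subtype.val_injective.injOn))).isOpen_compl
    obtain ⟨K, hKsub, hy₀K, hKc, hKo⟩ := hample.2 y₀ hy₀u (G.units \ R) hWopen
      ⟨hy₀u, fun hmem => hmem.2 rfl⟩
    obtain ⟨aK, haK⟩ := hsurj _ (hind K hKc (G.unitsOpen_isOpen_s12 hop hKo))
    have he₁N : ρ aK m₀M ∈ N := hN aK m₀M hm₀N
    have he₁val : (ρ aK m₀M).val = fun y => if y = y₀ then m₀M.val y₀ else 0 := by
      funext y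
      show G.rhoRaw (φ aK) m₀M.val y = _
      rw [haK, G.rhoRaw_indicator hKo.1]
      rcases eq_or_ne y y₀ with rfl | hne'
      · rw [if_pos hy₀K, if_pos rfl]
      · rw [if_neg hne']
        by_cases hyK : y ∈ K
        · rw [if_pos hyK]
          by_contra hy0
          exact (hKsub hyK).2 ⟨hy0, hne'⟩
        · rw [if_neg hyK]
    have hδN : ∀ (z : G.Arr) (hz : z ∈ O) (c : k),
        (⟨fun y => if y = z then c else 0, hδmem z c hz⟩ : ↥Msub) ∈ N := by
      intro z hz c
      obtain ⟨g, hdg, hrg⟩ := G.exists_arrow_of_orbit hy₀O hz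
      obtain ⟨B, hgB, -, hBc, hBo, hBinj, -, -⟩ :=
        G.exists_compact_open_bisection hop hample isOpen_univ (Set.mem_univ g)
      set c₀ := m₀M.val y₀ with hc₀def
      have hsmul : ((c / c₀) • B.indicator (fun _ => (1:k))) ∈ G.AlgebraSet k :=
        Submodule.smul_mem _ _ (hind B hBc hBo)
      obtain ⟨aB, haB⟩ := hsurj _ hsmul
      have hval : ∀ y, G.rhoRaw (φ aB) (ρ aK m₀M).val y = (if y = z then c else 0) := by
        intro y
        rw [haB, he₁val]
        unfold EtaleGroupoid.rhoRaw
        beta_reduce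
        by_cases hyz : y = z
        · rw [hyz, if_pos rfl]
          have huniq : ∀ g', G.r g' = z →
              ((c / c₀) • B.indicator (fun _ => (1:k))) g'
                * (if G.d g' = y₀ then c₀ else 0) ≠ 0 → g' = g := by
            intro g' _ hne'
            have hg'B : g' ∈ B := by
              by_contra hg'B
              apply hne'
              rw [Pi.smul_apply, Set.indicator_of_notMem hg'B, smul_zero, zero_mul]
            have hdg' : G.d g' = y₀ := by
              by_contra hh
              exact hne' (by rw [if_neg hh, mul_zero])
            exact hBinj hg'B hgB (hdg'.trans hdg.symm)
          rw [finsum_cond_eq_single (fun g' => G.r g' = z)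
            (fun g' => ((c / c₀) • B.indicator (fun _ => (1:k))) g'
              * (if G.d g' = y₀ then c₀ else 0)) g hrg huniq]
          rw [if_pos hdg, Pi.smul_apply, Set.indicator_of_mem hgB,
            smul_eq_mul, mul_one, div_mul_cancel₀ c hy₀]
        · rw [if_neg hyz]
          apply finsum_cond_eq_zero
          intro g' hg'
          by_cases hg'B : g' ∈ B
          · by_cases hdg' : G.d g' = y₀
            · exfalso
              apply hyz
              rw [← hg', hBinj hg'B hgB (hdg'.trans hdg.symm), hrg]
            · rw [if_neg hdg', mul_zero]
          · rw [Pi.smul_apply, Set.indicator_of_notMem hg'B, smul_zero, zero_mul]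
      have heq2 : (⟨fun y => if y = z then c else 0, hδmem z c hz⟩ : ↥Msub)
          = ρ aB (ρ aK m₀M) := by
        apply Subtype.ext
        funext y
        exact (hval y).symm
      rw [heq2]
      exact hN aB _ he₁N
    rw [AddSubgroup.eq_top_iff']
    intro m
    set sm := ((hmem_iff _).1 m.2).2.toFinset with hsm
    set elem : G.Arr → ↥Msub := fun z =>
      if hz : z ∈ O then ⟨fun y => if y = z then m.val z else 0, hδmem z (m.val z) hz⟩
      else 0 with helem
    have helemN : ∀ z, elem z ∈ N := by
      intro z
      rw [helem]
      by_cases hz : z ∈ O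
      · simp only [dif_pos hz]
        exact hδN z hz (m.val z)
      · simp only [dif_neg hz]
        exact zero_mem N
    have hmeq : m = ∑ z ∈ sm, elem z := by
      apply Subtype.ext
      have hcoe : ((∑ z ∈ sm, elem z : ↥Msub) : G.Arr → k) = ∑ z ∈ sm, (elem z).val :=
        map_sum Msub.subtype elem sm
      rw [hcoe]
      funext y
      rw [Finset.sum_apply]
      have hterm : ∀ z ∈ sm, (elem z).val y = if y = z then m.val z else 0 := by
        intro z hz
        have hzO : z ∈ O := ((hmem_iff _).1 m.2).1 (by
          rw [hsm, Set.Finite.mem_toFinset] at hz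
          exact hz)
        rw [helem]
        simp only [dif_pos hzO]
      rw [Finset.sum_congr rfl hterm, Finset.sum_ite_eq sm y (fun z => m.val z)]
      by_cases hy : y ∈ sm
      · rw [if_pos hy]
      · rw [if_neg hy]
        symm
        by_contra h0
        apply hy
        rw [hsm, Set.Finite.mem_toFinset]
        exact fun h => h0 h.symm
    rw [hmeq]
    exact AddSubgroup.sum_mem N (fun z _ => helemN z)
  · -- faithfulness
    intro a ha
    by_contra hane
    have hfne' : φ a ≠ 0 := fun h0 => hane (hinj (h0.trans hφ0.symm))
    obtain ⟨hfo, hfcl, hfc⟩ := G.algebraSet_support_isClopen (hφmem a)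
    have hcov : ∀ g : ↥(Function.support (φ a)), ∃ B : Set G.Arr,
        g.val ∈ B ∧ B ⊆ Set.univ ∧ IsCompact B ∧ IsOpen B ∧
        Set.InjOn G.d B ∧ Set.InjOn G.r B ∧ (∀ V, V ⊆ B → IsOpen V → IsOpen (G.d '' V)) :=
      fun g => G.exists_compact_open_bisection hop hample isOpen_univ (Set.mem_univ g.val)
    choose Bf hB1 hB2 hB3 hB4 hB5 hB6 hB7 using hcov
    obtain ⟨t, ht⟩ := hfc.elim_finite_subcover (fun g => Bf g) (fun g => hB4 g)
      (fun g hg => Set.mem_iUnion.2 ⟨⟨g, hg⟩, hB1 ⟨g, hg⟩⟩)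
    set D : ↥(Function.support (φ a)) × ↥(Function.support (φ a)) → Set G.Arr := fun p =>
      (fun q : G.Arr × G.Arr => G.d q.1) ''
        {q : G.Arr × G.Arr | q.1 ∈ (Bf p.1 \ Bf p.2) ∧ q.2 ∈ Bf p.2 ∧
          G.d q.1 = G.d q.2 ∧ G.r q.1 = G.r q.2} with hD
    have hDprop : ∀ p ∈ t ×ˢ t, IsClosed (D p) ∧ interior (D p) = ∅ := by
      intro p _
      have hpairclosed : IsClosed {q : G.Arr × G.Arr | q.1 ∈ (Bf p.1 \ Bf p.2) ∧
          q.2 ∈ Bf p.2 ∧ G.d q.1 = G.d q.2 ∧ G.r q.1 = G.r q.2} := by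
        have hrw : {q : G.Arr × G.Arr | q.1 ∈ (Bf p.1 \ Bf p.2) ∧ q.2 ∈ Bf p.2 ∧
            G.d q.1 = G.d q.2 ∧ G.r q.1 = G.r q.2}
            = ((Bf p.1 \ Bf p.2) ×ˢ (Bf p.2)) ∩
              ({q : G.Arr × G.Arr | G.d q.1 = G.d q.2} ∩ {q | G.r q.1 = G.r q.2}) := by
          ext q
          simp only [Set.mem_inter_iff, Set.mem_prod, Set.mem_setOf_eq]
          tauto
        rw [hrw]
        refine IsClosed.inter (IsClosed.prod ?_ (hB3 p.2).isClosed) (IsClosed.inter ?_ ?_)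
        · exact ((hB3 p.1).isClosed).inter (hB4 p.2).isClosed_compl
        · exact isClosed_eq (G.continuous_d.comp continuous_fst)
            (G.continuous_d.comp continuous_snd)
        · exact isClosed_eq (G.continuous_r.comp continuous_fst)
            (G.continuous_r.comp continuous_snd)
      have hpaircompact : IsCompact {q : G.Arr × G.Arr | q.1 ∈ (Bf p.1 \ Bf p.2) ∧
          q.2 ∈ Bf p.2 ∧ G.d q.1 = G.d q.2 ∧ G.r q.1 = G.r q.2} := by
        apply IsCompact.of_isClosed_subset ((hB3 p.1).prod (hB3 p.2)) hpairclosed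
        rintro q ⟨h1, h2, -, -⟩
        exact ⟨h1.1, h2⟩
      constructor
      · exact (hpaircompact.image_of_continuousOn
          ((G.continuous_d.comp continuous_fst).continuousOn)).isClosed
      · apply G.bad_set_interior_empty heff
          ((hB4 p.1).sdiff (hB3 p.2).isClosed)
          ((hB5 p.1).mono Set.diff_subset)
          (fun V hV hVo => hB7 p.1 V (hV.trans Set.diff_subset) hVo)
          (hB4 p.2) (hB5 p.2) (hB7 p.2)
          (fun x hx1 hx2 => hx1.2 hx2)
    set Bad := ⋃ p ∈ t ×ˢ t, D p with hBad
    have hBadcl : IsClosed Bad :=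
      Set.Finite.isClosed_biUnion (t ×ˢ t).finite_toSet (fun p hp => (hDprop p hp).1)
    have hBadint : interior Bad = ∅ := interior_finite_union_empty (t ×ˢ t) D hDprop
    have hSne : (Function.support (φ a)).Nonempty := Function.support_nonempty_iff.2 hfne'
    have hdS : IsOpen (G.d '' Function.support (φ a)) := G.isOpenMap_d _ hfo
    have hWne : ((G.d '' Function.support (φ a)) \ Bad).Nonempty := by
      by_contra hc
      rw [Set.not_nonempty_iff_eq_empty, Set.diff_eq_empty] at hc
      have hsub2 : G.d '' Function.support (φ a) ⊆ interior Bad := interior_maximal hc hdS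
      rw [hBadint] at hsub2
      obtain ⟨g₀, hg₀⟩ := hSne
      exact hsub2 ⟨g₀, hg₀, rfl⟩
    have hmeets := (G.unitsDense_iff hop (G.orbit_subset_units x₀)).1 hx₀dense
      ((G.d '' Function.support (φ a)) \ Bad) (hdS.sdiff hBadcl)
      (by
        obtain ⟨w, hw⟩ := hWne
        obtain ⟨gw, -, hgw⟩ := hw.1
        exact ⟨w, hw, by rw [← hgw]; exact G.d_mem_units gw⟩)
    obtain ⟨z, ⟨hzdS, hzBad⟩, hzO⟩ := hmeets
    obtain ⟨g₀, hg₀S, hg₀z⟩ := hzdS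
    have h0 := ha ⟨fun y => if y = z then 1 else 0, hδmem z 1 hzO⟩
    have hval := congrArg (fun mm : ↥Msub => mm.val (G.r g₀)) h0
    simp only [hρdef] at hval
    have hcomp : G.rhoRaw (φ a) (fun y => if y = z then (1:k) else 0) (G.r g₀)
        = φ a g₀ := by
      unfold EtaleGroupoid.rhoRaw
      have huniq : ∀ g', G.r g' = G.r g₀ →
          φ a g' * (if G.d g' = z then (1:k) else 0) ≠ 0 → g' = g₀ := by
        intro g' hg' hne'
        have hfg' : φ a g' ≠ 0 := fun h => hne' (by rw [h, zero_mul])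
        have hdg' : G.d g' = z := by
          by_contra hh
          exact hne' (by rw [if_neg hh, mul_zero])
        by_contra hgne
        obtain ⟨i, hit, hgi⟩ := Set.mem_iUnion₂.1 (ht hfg')
        obtain ⟨j, hjt, hgj⟩ := Set.mem_iUnion₂.1 (ht hg₀S)
        by_cases hgBj : g' ∈ Bf j
        · exact hgne (hB5 j hgBj hgj (by rw [hdg', hg₀z]))
        · apply hzBad
          rw [hBad]
          apply Set.mem_biUnion (Finset.mem_product.2 ⟨hit, hjt⟩ :
            ((i, j) : _ × _) ∈ t ×ˢ t)
          exact ⟨(g', g₀), ⟨⟨hgi, hgBj⟩, hgj, by rw [hdg', hg₀z], hg'⟩, hdg'⟩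
      rw [finsum_cond_eq_single (fun g' => G.r g' = G.r g₀)
        (fun g' => φ a g' * (if G.d g' = z then (1:k) else 0)) g₀ rfl huniq]
      rw [if_pos hg₀z, mul_one]
    rw [hcomp] at hval
    exact hg₀S hval
end
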